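/- arXiv:2112.13579 — 6 statements merged into one kernel-verified Lean document; each statement's English description precedes it below -/
import Mathlib

section
/- Let f = f(t) be a nonnegative function on [0,∞) satisfying ∫₀^∞ f(τ) dτ < C₀ for some constant C₀ > 0, and f(t) ≤ C₁ f(s) for all 0 ≤ s < t for some constant C₁ > 0. Then for C₂ = max{2 C₁ f(0), 4 C₀ C₁} and for any t > 0, f(t) ≤ C₂ (1+t)^{-1}. -/
open MeasureTheory Set

/-- Lemma 2.6: explicit decay rate for a nonnegative integrable function that is
decreasing in a generalized sense. -/
theorem decay_rate (f : ℝ → ℝ) (C₀ C₁ : ℝ) (hC₀ : 0 < C₀) (hC₁ : 0 < C₁)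
    (hnonneg : ∀ t, 0 ≤ t → 0 ≤ f t)
    (hint : IntegrableOn f (Ici 0))
    (hbound : ∫ τ in Ici (0:ℝ), f τ < C₀)
    (hmono : ∀ s t : ℝ, 0 ≤ s → s < t → f t ≤ C₁ * f s) :
    ∀ t : ℝ, 0 < t → f t ≤ max (2 * C₁ * f 0) (4 * C₀ * C₁) * (1 + t)⁻¹ := by
  intro t ht
  have h1t : 0 < 1 + t := by linarith
  rcases le_or_gt t 1 with hle | hgt
  · -- small time: f t ≤ C₁ f 0 and (1+t)⁻¹ ≥ 1/2
    have h1 : f t ≤ C₁ * f 0 := hmono 0 t le_rfl ht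
    have h2 : (2 : ℝ)⁻¹ ≤ (1 + t)⁻¹ := by
      apply inv_anti₀ h1t; linarith
    have h3 : 2 * C₁ * f 0 ≤ max (2 * C₁ * f 0) (4 * C₀ * C₁) := le_max_left _ _
    have hf0 : 0 ≤ f 0 := hnonneg 0 le_rfl
    calc f t ≤ C₁ * f 0 := h1
      _ = (2 * C₁ * f 0) * (2:ℝ)⁻¹ := by ring
      _ ≤ max (2 * C₁ * f 0) (4 * C₀ * C₁) * (1 + t)⁻¹ := by
          apply mul_le_mul h3 h2 (by norm_num)
          exact le_trans (by positivity) h3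
  · -- large time: integrate on [t/2, t)
    have hsub : Ico (t/2) t ⊆ Ici (0:ℝ) := fun x hx => le_trans (by linarith) hx.1
    have hintIco : IntegrableOn f (Ico (t/2) t) := hint.mono_set hsub
    have hlow : (t/2) * (f t / C₁) ≤ ∫ τ in Ico (t/2) t, f τ := by
      have hconst : ∫ _τ in Ico (t/2) t, (f t / C₁) = (t/2) * (f t / C₁) := by
        rw [setIntegral_const]
        rw [Real.volume_real_Ico_of_le (by linarith), smul_eq_mul]
        ring
      rw [← hconst]
      apply setIntegral_mono_on (integrableOn_const (by
        rw [Real.volume_Ico]; exact ENNReal.ofReal_ne_top)) hintIco measurableSet_Ico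
      intro x hx
      rw [div_le_iff₀ hC₁, mul_comm]
      exact hmono x t (le_trans (by linarith) hx.1) hx.2
    have hup : ∫ τ in Ico (t/2) t, f τ ≤ ∫ τ in Ici (0:ℝ), f τ := by
      apply setIntegral_mono_set hint
      · filter_upwards [ae_restrict_mem measurableSet_Ici] with x hx
        exact hnonneg x hx
      · exact Filter.Eventually.of_forall hsub
    have key : (t/2) * (f t / C₁) < C₀ := lt_of_le_of_lt (le_trans hlow hup) hbound
    have h2t : 1 + t < 2 * t := by linarith
    have hft : f t ≤ 2 * C₀ * C₁ / t := by
      have heq : t / 2 * (f t / C₁) * C₁ = t * f t / 2 := by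
        field_simp
      have := mul_lt_mul_of_pos_right key hC₁
      rw [heq] at this
      rw [le_div_iff₀ ht]
      linarith
    calc f t ≤ 2 * C₀ * C₁ / t := hft
      _ ≤ 4 * C₀ * C₁ * (1 + t)⁻¹ := by
          rw [← div_eq_mul_inv, div_le_div_iff₀ ht h1t]
          nlinarith [mul_lt_mul_of_pos_left h2t (mul_pos hC₀ hC₁)]
      _ ≤ max (2 * C₁ * f 0) (4 * C₀ * C₁) * (1 + t)⁻¹ := by
          apply mul_le_mul_of_nonneg_right (le_max_right _ _) (by positivity)
end

section
/- Let Ω = 𝕋 × ℝ and let f̃ denote the oscillation part of f (f̃ = f − f̄ with f̄ the horizontal average). If ∂₁ f̃ ∈ H¹(Ω), then ‖f̃‖_{L^∞(Ω)} ≤ C ‖∂₁ f̃‖_{H¹(Ω)} for an absolute constant C. -/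
open MeasureTheory Set

/-- The measure on Ω = 𝕋 × ℝ (with 𝕋 = [0,1] the 1D periodic box), modeled as
Lebesgue measure on the fundamental strip (0,1] × ℝ ⊆ ℝ². Functions on Ω are
modeled as functions on ℝ² that are 1-periodic in the first variable. -/
noncomputable def μΩ : Measure (ℝ × ℝ) := (volume.restrict (Set.Ioc (0:ℝ) 1)).prod volume

/-- The horizontal average f̄(x₂) = ∫_𝕋 f(x₁, x₂) dx₁. -/
noncomputable def havg (f : ℝ × ℝ → ℝ) (y : ℝ) : ℝ := ∫ t in (0:ℝ)..1, f (t, y)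

/-- The oscillation part f̃ = f − f̄. -/
noncomputable def osc (f : ℝ × ℝ → ℝ) (x : ℝ × ℝ) : ℝ := f x - havg f x.2

section Aux
open Filter Topology
open scoped ENNReal Interval


lemma agmon1d (u u' : ℝ → ℝ) (hu : ∀ s, HasDerivAt u (u' s) s)
    (h2 : Integrable (fun s => u s ^ 2)) (h2' : Integrable (fun s => u' s ^ 2)) (b : ℝ) :
    u b ^ 2 ≤ (∫ s, u s ^ 2) + ∫ s, u' s ^ 2 := by
  have hucont : Continuous u := by
    rw [continuous_iff_continuousAt]; exact fun s => (hu s).continuousAt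
  have hu'meas : Measurable u' := by
    have : u' = deriv u := funext fun s => ((hu s).deriv).symm
    rw [this]; exact measurable_deriv u
  set w : ℝ → ℝ := fun s => u' s * u s + u s * u' s with hwdef
  have hderiv : ∀ s, HasDerivAt (fun t => u t * u t) (w s) s := fun s => (hu s).mul (hu s)
  have hwbound : ∀ s, ‖w s‖ ≤ u s ^ 2 + u' s ^ 2 := by
    intro s
    have h1 : w s = 2 * (u s * u' s) := by simp [hwdef]; ring
    have h2 : ‖w s‖ = 2 * (|u s| * |u' s|) := by
      rw [h1, Real.norm_eq_abs, abs_mul, abs_mul, abs_two]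
    have h3 := two_mul_le_add_sq |u s| |u' s|
    rw [h2]
    calc 2 * (|u s| * |u' s|) = 2 * |u s| * |u' s| := by ring
    _ ≤ |u s| ^ 2 + |u' s| ^ 2 := h3
    _ = u s ^ 2 + u' s ^ 2 := by rw [sq_abs, sq_abs]
  have hwmeas : AEStronglyMeasurable w volume :=
    ((hu'meas.mul hucont.measurable).add (hucont.measurable.mul hu'meas)).aestronglyMeasurable
  have hwint : Integrable w := (h2.add h2').mono' hwmeas (ae_of_all _ hwbound)
  have key : ∀ c : ℝ, ∫ s in c..b, w s = u b * u b - u c * u c := fun c =>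
    intervalIntegral.integral_eq_sub_of_hasDerivAt (fun x _ => hderiv x) hwint.intervalIntegrable
  have T1 : Tendsto (fun c => ∫ s in c..b, w s) atBot (𝓝 (∫ s in Iic b, w s)) :=
    intervalIntegral_tendsto_integral_Iic b hwint.integrableOn tendsto_id
  set L : ℝ := u b * u b - ∫ s in Iic b, w s with hLdef
  have T2 : Tendsto (fun c => u c * u c) atBot (𝓝 L) := by
    have : (fun c => u c * u c) = fun c => u b * u b - ∫ s in c..b, w s := by
      funext c; rw [key c]; ring
    rw [this]; exact tendsto_const_nhds.sub T1
  have hL0 : L ≤ 0 := by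
    by_contra hL
    push_neg at hL
    have hev : ∀ᶠ c in atBot, L / 2 < u c * u c :=
      T2.eventually (eventually_gt_nhds (by linarith))
    obtain ⟨c₀, hc₀⟩ := eventually_atBot.mp hev
    have hsub : Iic c₀ ⊆ {s : ℝ | L / 2 ≤ u s ^ 2} := by
      intro s hs
      have := hc₀ s hs
      simp only [mem_setOf_eq, sq]
      linarith
    have hfin := h2.measure_ge_lt_top (show (0:ℝ) < L / 2 by linarith)
    have : (volume : Measure ℝ) (Iic c₀) ≤ volume {s : ℝ | L / 2 ≤ u s ^ 2} :=
      measure_mono hsub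
    rw [Real.volume_Iic] at this
    exact absurd (lt_of_le_of_lt this hfin) (by simp)
  have hvb : u b ^ 2 ≤ ∫ s in Iic b, w s := by
    have h : u b ^ 2 = u b * u b := sq (u b)
    rw [h]; linarith [hL0]
  calc u b ^ 2 ≤ ∫ s in Iic b, w s := hvb
    _ ≤ ∫ s in Iic b, (u s ^ 2 + u' s ^ 2) := by
        apply integral_mono hwint.integrableOn ((h2.add h2').integrableOn)
        intro s
        exact le_trans (le_abs_self _) (hwbound s)
    _ ≤ ∫ s, (u s ^ 2 + u' s ^ 2) := by
        apply setIntegral_le_integral (h2.add h2')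
        exact ae_of_all _ fun s => add_nonneg (sq_nonneg _) (sq_nonneg _)
    _ = (∫ s, u s ^ 2) + ∫ s, u' s ^ 2 := integral_add h2 h2'


lemma meanzero_bound (g h : ℝ → ℝ) (hg : ∀ s, HasDerivAt g (h s) s) (hcont : Continuous h)
    (hzero : ∫ s in (0:ℝ)..1, g s = 0) {a : ℝ} (ha : a ∈ Ico (0:ℝ) 1) :
    |g a| ≤ ∫ r in Ioc (0:ℝ) 1, |h r| := by
  set K : ℝ := ∫ r in Ioc (0:ℝ) 1, |h r| with hK
  have hgcont : Continuous g := by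
    rw [continuous_iff_continuousAt]; exact fun s => (hg s).continuousAt
  have habsint : IntegrableOn (fun r => |h r|) (Ioc (0:ℝ) 1) :=
    (hcont.abs).integrableOn_Ioc
  have hptwise : ∀ s ∈ Ioc (0:ℝ) 1, |g a - g s| ≤ K := by
    intro s hs
    have hftc : ∫ r in s..a, h r = g a - g s :=
      intervalIntegral.integral_eq_sub_of_hasDerivAt (fun r _ => hg r)
        (hcont.intervalIntegrable s a)
    rw [← hftc]
    have hsub : Ι s a ⊆ Ioc (0:ℝ) 1 := by
      intro y hy
      rcases hy with ⟨hy1, hy2⟩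
      constructor
      · exact lt_of_le_of_lt (le_min (le_of_lt hs.1) ha.1) hy1
      · exact le_trans hy2 (max_le hs.2 (le_of_lt ha.2))
    calc |∫ r in s..a, h r| ≤ ∫ r in Ι s a, |h r| := by
          simpa [Real.norm_eq_abs] using intervalIntegral.norm_integral_le_integral_norm_uIoc
            (f := h) (a := s) (b := a) (μ := volume)
      _ ≤ K := setIntegral_mono_set habsint (ae_of_all _ fun r => abs_nonneg _)
            (HasSubset.Subset.eventuallyLE hsub)
  have hga : g a = ∫ s in (0:ℝ)..1, (g a - g s) := by
    rw [intervalIntegral.integral_sub (intervalIntegrable_const)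
      (hgcont.intervalIntegrable 0 1), hzero, intervalIntegral.integral_const]
    simp
  rw [hga]
  have h1 : |∫ s in (0:ℝ)..1, (g a - g s)| ≤ ∫ s in Ι (0:ℝ) 1, |g a - g s| := by
    simpa [Real.norm_eq_abs] using intervalIntegral.norm_integral_le_integral_norm_uIoc
      (f := fun s => g a - g s) (a := (0:ℝ)) (b := 1) (μ := volume)
  refine le_trans h1 ?_
  rw [uIoc_of_le (zero_le_one)]
  calc ∫ s in Ioc (0:ℝ) 1, |g a - g s| ≤ ∫ _ in Ioc (0:ℝ) 1, K := by
        apply setIntegral_mono_on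
          ((continuous_const.sub hgcont).abs.integrableOn_Ioc)
          (integrableOn_const (by simp))
          measurableSet_Ioc
        exact hptwise
    _ = K := by simp [Real.volume_Ioc]
  
lemma cs_Ioc (h : ℝ → ℝ) (hcont : Continuous h) :
    (∫ r in Ioc (0:ℝ) 1, |h r|) ^ 2 ≤ ∫ r in Ioc (0:ℝ) 1, h r ^ 2 := by
  set ν := (volume : Measure ℝ).restrict (Ioc (0:ℝ) 1) with hν
  set c : ℝ := ∫ r in Ioc (0:ℝ) 1, |h r| with hc
  have hint : Integrable (fun r => |h r|) ν := hcont.abs.integrableOn_Ioc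
  have hint2 : Integrable (fun r => h r ^ 2) ν := (hcont.pow 2).integrableOn_Ioc
  have hnn : (0:ℝ) ≤ ∫ r, (|h r| - c) ^ 2 ∂ν := integral_nonneg fun r => sq_nonneg _
  have hexp : ∫ r, (|h r| - c) ^ 2 ∂ν
      = (∫ r, h r ^ 2 ∂ν) - 2 * c * c + c ^ 2 := by
    have : (fun r => (|h r| - c) ^ 2) = fun r => h r ^ 2 - (2 * c) * |h r| + c ^ 2 := by
      funext r; rw [sub_sq, sq_abs]; ring
    have hintB : Integrable (fun r => 2 * c * |h r|) ν := hint.const_mul _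
    have hintA : Integrable (fun r => h r ^ 2 - 2 * c * |h r|) ν := hint2.sub hintB
    rw [this, integral_add hintA (integrable_const _), integral_sub hint2 hintB,
      integral_const, MeasureTheory.integral_const_mul]
    have : ν.real univ = 1 := by
      rw [hν, measureReal_def, Measure.restrict_apply_univ, Real.volume_Ioc]; norm_num
    rw [this]
    simp [← hc]
    exact Or.inl rfl
  nlinarith [hnn, hexp]

lemma elpnorm_sq {α : Type*} [MeasurableSpace α] {μ : Measure α} (f : α → ℝ)
    (hf : MemLp f 2 μ) : (eLpNorm f 2 μ).toReal ^ 2 = ∫ x, f x ^ 2 ∂μ := by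
  have hsq : ∀ x, ‖f x‖ ^ ((2:ℝ≥0∞).toReal) = f x ^ 2 := by
    intro x
    rw [ENNReal.toReal_ofNat, show (2:ℝ) = ((2:ℕ):ℝ) by norm_num, Real.rpow_natCast]
    simp [sq_abs]
  have h_int : (0:ℝ) ≤ ∫ x, ‖f x‖ ^ (2:ℝ≥0∞).toReal ∂μ :=
    integral_nonneg fun x => by positivity
  rw [hf.eLpNorm_eq_integral_rpow_norm two_ne_zero ENNReal.ofNat_ne_top,
    ENNReal.toReal_ofReal (Real.rpow_nonneg h_int _)]
  rw [← Real.rpow_natCast (_ ^ _) 2, ← Real.rpow_mul h_int]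
  have hexp : (2:ℝ≥0∞).toReal⁻¹ * ((2:ℕ):ℝ) = 1 := by
    rw [ENNReal.toReal_ofNat]; norm_num
  rw [hexp, Real.rpow_one]
  exact integral_congr_ae (ae_of_all _ hsq)


end Aux

/-- L^∞ Poincaré-type bound for the oscillation part:
‖f̃‖_{L^∞(Ω)} ≤ C ‖∂₁f̃‖_{H¹(Ω)} for an absolute constant C,
where ‖g‖_{H¹}² = ‖g‖_{L²}² + ‖∂₁g‖_{L²}² + ‖∂₂g‖_{L²}². -/

theorem osc_linfty_le_H1 :
    ∃ C : ℝ, 0 < C ∧ ∀ (f t1 t11 t12 : ℝ × ℝ → ℝ),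
      (∀ x : ℝ × ℝ, f (x.1 + 1, x.2) = f x) →
      (∀ y : ℝ, IntegrableOn (fun t => f (t, y)) (Ioc (0:ℝ) 1)) →
      (∀ x : ℝ × ℝ, HasDerivAt (fun t => osc f (t, x.2)) (t1 x) x.1) →
      (∀ x : ℝ × ℝ, HasDerivAt (fun t => t1 (t, x.2)) (t11 x) x.1) →
      (∀ x : ℝ × ℝ, HasDerivAt (fun s => t1 (x.1, s)) (t12 x) x.2) →
      MemLp t1 2 μΩ → MemLp t11 2 μΩ → MemLp t12 2 μΩ →
      ∀ x : ℝ × ℝ, |osc f x| ≤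
        C * Real.sqrt ((eLpNorm t1 2 μΩ).toReal ^ 2 + (eLpNorm t11 2 μΩ).toReal ^ 2 +
          (eLpNorm t12 2 μΩ).toReal ^ 2) := by
  refine ⟨1, one_pos, ?_⟩
  intro f t1 t11 t12 hper hfint ht1 ht11 ht12 hm1 hm11 hm12 x
  obtain ⟨a, b⟩ := x
  set g : ℝ → ℝ := fun s => osc f (s, b) with hgdef
  have hg : ∀ s, HasDerivAt g (t1 (s, b)) s := fun s => ht1 (s, b)
  have ht1cont : Continuous fun r => t1 (r, b) := by
    rw [continuous_iff_continuousAt]; exact fun r => (ht11 (r, b)).continuousAt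
  -- periodicity of g
  have hgp : Function.Periodic g 1 := by
    intro s
    show osc f (s + 1, b) = osc f (s, b)
    have hp := hper (s, b)
    simp only [osc]
    simp only at hp ⊢
    rw [hp]
  set a' : ℝ := Int.fract a with ha'
  have ha'mem : a' ∈ Ico (0:ℝ) 1 := ⟨Int.fract_nonneg a, Int.fract_lt_one a⟩
  have hga : g a' = g a := by
    have h := hgp.sub_int_mul_eq (x := a) ⌊a⌋
    rw [mul_one] at h
    rw [ha']
    exact h
  -- zero mean of g on the torus
  have hint0 : IntervalIntegrable (fun s => f (s, b)) volume 0 1 := by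
    rw [intervalIntegrable_iff, uIoc_of_le zero_le_one]; exact hfint b
  have hzero : ∫ s in (0:ℝ)..1, g s = 0 := by
    simp only [hgdef, osc]
    rw [intervalIntegral.integral_sub hint0 intervalIntegrable_const,
      intervalIntegral.integral_const]
    simp [havg]
  have hKbound : |g a'| ≤ ∫ r in Ioc (0:ℝ) 1, |t1 (r, b)| :=
    meanzero_bound g (fun s => t1 (s, b)) hg ht1cont hzero ha'mem
  have hCS := cs_Ioc (fun r => t1 (r, b)) ht1cont
  -- Fubini + Agmon
  have ht1sq : Integrable (fun x : ℝ × ℝ => t1 x ^ 2) μΩ := hm1.integrable_sq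
  have ht12sq : Integrable (fun x : ℝ × ℝ => t12 x ^ 2) μΩ := hm12.integrable_sq
  have hμΩ : μΩ = ((volume : Measure ℝ).restrict (Ioc (0:ℝ) 1)).prod volume := rfl
  rw [hμΩ] at ht1sq ht12sq
  have hae1 := ht1sq.prod_right_ae
  have hae2 := ht12sq.prod_right_ae
  have haeb : ∀ᵐ r ∂(volume.restrict (Ioc (0:ℝ) 1)),
      t1 (r, b) ^ 2 ≤ (∫ s, t1 (r, s) ^ 2) + ∫ s, t12 (r, s) ^ 2 := by
    filter_upwards [hae1, hae2] with r h1 h2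
    exact agmon1d (fun s => t1 (r, s)) (fun s => t12 (r, s)) (fun s => ht12 (r, s)) h1 h2 b
  have hmono : ∫ r in Ioc (0:ℝ) 1, t1 (r, b) ^ 2
      ≤ ∫ r in Ioc (0:ℝ) 1, ((∫ s, t1 (r, s) ^ 2) + ∫ s, t12 (r, s) ^ 2) :=
    integral_mono_ae ((ht1cont.pow 2).integrableOn_Ioc)
      (ht1sq.integral_prod_left.add ht12sq.integral_prod_left) haeb
  have hsum : ∫ r in Ioc (0:ℝ) 1, ((∫ s, t1 (r, s) ^ 2) + ∫ s, t12 (r, s) ^ 2)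
      = (∫ x, t1 x ^ 2 ∂μΩ) + ∫ x, t12 x ^ 2 ∂μΩ := by
    rw [integral_add ht1sq.integral_prod_left ht12sq.integral_prod_left, hμΩ,
      integral_prod _ ht1sq, integral_prod _ ht12sq]
  have he1 : (eLpNorm t1 2 μΩ).toReal ^ 2 = ∫ x, t1 x ^ 2 ∂μΩ := elpnorm_sq t1 hm1
  have he12 : (eLpNorm t12 2 μΩ).toReal ^ 2 = ∫ x, t12 x ^ 2 ∂μΩ := elpnorm_sq t12 hm12
  set S : ℝ := (eLpNorm t1 2 μΩ).toReal ^ 2 + (eLpNorm t11 2 μΩ).toReal ^ 2 +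
      (eLpNorm t12 2 μΩ).toReal ^ 2 with hS
  have habs2 : |osc f (a, b)| ^ 2 ≤ S := by
    have h0 : |osc f (a, b)| = |g a'| := by rw [hga]
    rw [h0]
    calc |g a'| ^ 2 ≤ (∫ r in Ioc (0:ℝ) 1, |t1 (r, b)|) ^ 2 :=
          pow_le_pow_left₀ (abs_nonneg _) hKbound 2
      _ ≤ ∫ r in Ioc (0:ℝ) 1, t1 (r, b) ^ 2 := hCS
      _ ≤ (∫ x, t1 x ^ 2 ∂μΩ) + ∫ x, t12 x ^ 2 ∂μΩ := by rw [← hsum]; exact hmono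
      _ ≤ S := by
          rw [hS, ← he1, ← he12]
          have := sq_nonneg (eLpNorm t11 2 μΩ).toReal
          linarith
  have final : |osc f (a, b)| ≤ Real.sqrt S := by
    calc |osc f (a, b)| = Real.sqrt (|osc f (a, b)| ^ 2) :=
          (Real.sqrt_sq (abs_nonneg _)).symm
      _ ≤ Real.sqrt S := Real.sqrt_le_sqrt habs2
  simpa [hS] using final
end

section
/- Let Ω = 𝕋 × ℝ. There is a constant C such that for any f, g, h ∈ L²(Ω) with ∂₁f ∈ L²(Ω) and ∂₂g ∈ L²(Ω), |∫_Ω f g h dx| ≤ C ‖f‖_{L²}^{1/2} (‖f‖_{L²} + ‖∂₁f‖_{L²})^{1/2} ‖g‖_{L²}^{1/2} ‖∂₂g‖_{L²}^{1/2} ‖h‖_{L²}. -/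
open MeasureTheory Set

open scoped ENNReal NNReal

/-- The fundamental-domain measure on the first factor. -/
noncomputable def νT : Measure ℝ := volume.restrict (Set.Ioc (0:ℝ) 1)

instance : IsFiniteMeasure νT := by
  constructor
  rw [νT, Measure.restrict_apply_univ]
  simp [Real.volume_Ioc]

lemma periodic_intervalIntegrable {f : ℝ → ℝ} (hper : Function.Periodic f 1)
    (h01 : IntervalIntegrable f volume 0 1) (a b : ℝ) :
    IntervalIntegrable f volume a b := by
  have hint : ∀ n : ℤ, IntervalIntegrable f volume n (n + 1) := by
    intro n
    have h2 : IntervalIntegrable (fun x => f (x - (n : ℝ))) volume (0 + n) (1 + n) :=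
      h01.comp_sub_right (n : ℝ)
    have he : (fun x : ℝ => f (x - (n : ℝ))) = f := by
      funext x
      simpa using hper.sub_int_mul_eq (n := n) (x := x)
    rw [he] at h2
    simpa [add_comm] using h2
  have hmn : ∀ m n : ℤ, m ≤ n → IntervalIntegrable f volume m n := by
    intro m n hle
    refine Int.leInduction (motive := fun k _ => IntervalIntegrable f volume (m:ℝ) (k:ℝ)) ?_ ?_ n hle
    · exact IntervalIntegrable.refl
    · intro n hmn ih
      refine ih.trans ?_
      have := hint n
      push_cast
      push_cast at this
      exact this
  set m : ℤ := ⌊min a b⌋ with hm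
  set n : ℤ := ⌈max a b⌉ with hn
  have hmle : (m : ℝ) ≤ min a b := Int.floor_le _
  have hnle : max a b ≤ (n : ℝ) := Int.le_ceil _
  have hmn' : (m : ℝ) ≤ (n : ℝ) := le_trans hmle (le_trans (min_le_max) hnle)
  refine (hmn m n (by exact_mod_cast hmn')).mono_set ?_
  rw [Set.uIcc_of_le hmn']
  refine Set.uIcc_subset_Icc ?_ ?_
  · exact ⟨hmle.trans (min_le_left _ _), (le_max_left a b).trans hnle⟩
  · exact ⟨hmle.trans (min_le_right _ _), (le_max_right a b).trans hnle⟩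

lemma torus_agmon {u u' : ℝ → ℝ} (hper : ∀ t, u (t + 1) = u t)
    (hd : ∀ t, HasDerivAt u (u' t) t)
    (hi : IntervalIntegrable (fun t => u t * u' t) volume 0 1) (x : ℝ) :
    u x ^ 2 ≤ (∫ t in (0:ℝ)..1, u t ^ 2) + ∫ t in (0:ℝ)..1, 2 * |u t * u' t| := by
  have hperP : Function.Periodic u 1 := hper
  have ucont : Continuous u := continuous_iff_continuousAt.mpr fun t => (hd t).continuousAt
  have hper' : Function.Periodic u' 1 := by
    intro t
    have h1 : HasDerivAt (fun s : ℝ => u (s + 1)) (u' (t + 1) * 1) t :=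
      (hd (t + 1)).comp t ((hasDerivAt_id t).add_const 1)
    have h2 : (fun s : ℝ => u (s + 1)) = u := funext hper
    rw [h2, mul_one] at h1
    exact h1.unique (hd t)
  have hperuu : Function.Periodic (fun t => u t * u' t) 1 := by
    intro t; simp only [hper t, hper' t]
  have hiuu : ∀ a b : ℝ, IntervalIntegrable (fun t => u t * u' t) volume a b :=
    periodic_intervalIntegrable hperuu hi
  have habs : ∀ a b : ℝ, IntervalIntegrable (fun t => 2 * |u t * u' t|) volume a b :=
    fun a b => ((hiuu a b).abs).const_mul 2
  have hu2 : ∀ a b : ℝ, IntervalIntegrable (fun t => u t ^ 2) volume a b :=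
    fun a b => (ucont.pow 2).intervalIntegrable (μ := volume) a b
  obtain ⟨t₀, ht₀mem, hmin⟩ := isCompact_Icc.exists_isMinOn (α := ℝ)
    (nonempty_Icc.mpr zero_le_one) ((ucont.pow 2).continuousOn)
  have step1 : u t₀ ^ 2 ≤ ∫ t in (0:ℝ)..1, u t ^ 2 := by
    have h := intervalIntegral.integral_mono_on (a := 0) (b := 1) (μ := volume)
      zero_le_one intervalIntegrable_const (hu2 0 1) (fun t ht => hmin ht)
    simpa using h
  set n : ℤ := ⌊x - t₀⌋ with hn
  set x' : ℝ := x - n with hx'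
  have hfl := Int.floor_le (x - t₀)
  have hfl2 := Int.lt_floor_add_one (x - t₀)
  have hx'1 : t₀ ≤ x' := by rw [hx']; rw [hn] at *; linarith
  have hx'2 : x' ≤ t₀ + 1 := by rw [hx']; rw [hn] at *; linarith
  have hux : u x' = u x := by
    rw [hx']
    simpa using hperP.sub_int_mul_eq (n := n) (x := x)
  have hderiv2 : ∀ t : ℝ, HasDerivAt (fun s => u s ^ 2) (2 * (u t * u' t)) t := by
    intro t
    have := (hd t).fun_pow 2
    simpa [mul_assoc, mul_comm, mul_left_comm] using this
  have hftc : u x' ^ 2 - u t₀ ^ 2 = ∫ t in t₀..x', 2 * (u t * u' t) := by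
    rw [intervalIntegral.integral_eq_sub_of_hasDerivAt (fun t _ => hderiv2 t)
      ((hiuu t₀ x').const_mul 2)]
  have hb1 : (∫ t in t₀..x', 2 * (u t * u' t)) ≤ ∫ t in t₀..x', 2 * |u t * u' t| :=
    intervalIntegral.integral_mono_on hx'1 ((hiuu t₀ x').const_mul 2) (habs t₀ x')
      (fun t _ => by have := le_abs_self (u t * u' t); linarith)
  have hadd := intervalIntegral.integral_add_adjacent_intervals
    (habs t₀ x') (habs x' (t₀ + 1))
  have hpos : 0 ≤ ∫ t in x'..(t₀+1), 2 * |u t * u' t| :=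
    intervalIntegral.integral_nonneg hx'2 (fun t _ => by positivity)
  have hperabs : Function.Periodic (fun t => 2 * |u t * u' t|) 1 := by
    intro t; simp only [hper t, hper' t]
  have hb3 : (∫ t in t₀..(t₀+1), 2 * |u t * u' t|) = ∫ t in (0:ℝ)..1, 2 * |u t * u' t| := by
    simpa using hperabs.intervalIntegral_add_eq t₀ 0
  have hux2 : u x' ^ 2 = u x ^ 2 := by rw [hux]
  linarith [hftc, hb1, hadd, hpos, hb3, step1, hux2]

lemma line_agmon {v v' : ℝ → ℝ} (hd : ∀ y, HasDerivAt v (v' y) y)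
    (hv2 : Integrable (fun y => v y ^ 2) volume)
    (hvv' : Integrable (fun y => v y * v' y) volume) (y : ℝ) :
    v y ^ 2 ≤ ∫ s, 2 * |v s * v' s| := by
  by_contra hcon
  push_neg at hcon
  set M := ∫ s, 2 * |v s * v' s| with hM
  set δ := v y ^ 2 - M with hδ
  have hδpos : 0 < δ := by rw [hδ]; linarith
  have vcont : Continuous v := continuous_iff_continuousAt.mpr fun t => (hd t).continuousAt
  have hderiv2 : ∀ t : ℝ, HasDerivAt (fun s => v s ^ 2) (2 * (v t * v' t)) t := by
    intro t
    simpa [mul_assoc, mul_comm, mul_left_comm] using (hd t).fun_pow 2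
  have habs : Integrable (fun s => 2 * |v s * v' s|) volume := (hvv'.abs).const_mul 2
  have key : ∀ N : ℕ, (N : ℝ) * δ ≤ ∫ s in (y - N)..y, v s ^ 2 := by
    intro N
    induction N with
    | zero => simp
    | succ N ih =>
      have hlt : y - ((N:ℝ)+1) ≤ y - N := by linarith
      obtain ⟨a, hamem, hmin⟩ := isCompact_Icc.exists_isMinOn (α := ℝ)
        (nonempty_Icc.mpr hlt) ((vcont.pow 2).continuousOn)
      have h1 : v a ^ 2 ≤ ∫ s in (y - ((N:ℝ)+1))..(y - N), v s ^ 2 := by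
        have h := intervalIntegral.integral_mono_on (μ := volume) hlt
          intervalIntegrable_const (hv2.intervalIntegrable) (fun t ht => hmin ht)
        simpa using h
      have hay : a ≤ y := le_trans hamem.2 (by simp [sub_le_self_iff])
      have hftc : v y ^ 2 - v a ^ 2 = ∫ s in a..y, 2 * (v s * v' s) := by
        rw [intervalIntegral.integral_eq_sub_of_hasDerivAt (fun t _ => hderiv2 t)
          ((hvv'.intervalIntegrable).const_mul 2)]
      have hb1 : (∫ s in a..y, 2 * (v s * v' s)) ≤ ∫ s in a..y, 2 * |v s * v' s| :=
        intervalIntegral.integral_mono_on hay ((hvv'.intervalIntegrable).const_mul 2)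
          (habs.intervalIntegrable)
          (fun t _ => by have := le_abs_self (v t * v' t); linarith)
      have hb2 : (∫ s in a..y, 2 * |v s * v' s|) ≤ M := by
        rw [intervalIntegral.integral_of_le hay]
        exact setIntegral_le_integral habs (Filter.Eventually.of_forall fun s => by positivity)
      have h2 : δ ≤ v a ^ 2 := by rw [hδ]; linarith
      have hadd := intervalIntegral.integral_add_adjacent_intervals
        (hv2.intervalIntegrable (a := y - ((N:ℝ)+1)) (b := y - N))
        (hv2.intervalIntegrable (a := y - (N:ℝ)) (b := y))
      push_cast
      linarith [ih, h1, h2, hadd]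
  obtain ⟨N, hN⟩ := exists_nat_gt ((∫ s, v s ^ 2) / δ)
  have hle : (∫ s in (y - N)..y, v s ^ 2) ≤ ∫ s, v s ^ 2 := by
    rw [intervalIntegral.integral_of_le (by simp [sub_le_self_iff])]
    exact setIntegral_le_integral hv2 (Filter.Eventually.of_forall fun s => sq_nonneg _)
  have hgt : (∫ s, v s ^ 2) < (N : ℝ) * δ := by
    rw [div_lt_iff₀ hδpos] at hN; linarith
  linarith [key N]

lemma toReal_eLpNorm_sq {α : Type*} [MeasurableSpace α] {μ : Measure α} {f : α → ℝ}
    (hf : MemLp f 2 μ) : (eLpNorm f 2 μ).toReal ^ 2 = ∫ x, f x ^ 2 ∂μ := by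
  have hnn : 0 ≤ ∫ x, ‖f x‖ ^ ((2:ℝ≥0∞).toReal) ∂μ :=
    integral_nonneg fun x => Real.rpow_nonneg (norm_nonneg _) _
  rw [hf.eLpNorm_eq_integral_rpow_norm two_ne_zero ENNReal.ofNat_ne_top,
    ENNReal.toReal_ofReal (Real.rpow_nonneg hnn _)]
  rw [← Real.rpow_natCast ((∫ x, ‖f x‖ ^ ((2:ℝ≥0∞).toReal) ∂μ) ^ ((2:ℝ≥0∞).toReal)⁻¹) 2,
    ← Real.rpow_mul hnn]
  have h2 : (2:ℝ≥0∞).toReal = 2 := by simp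
  rw [h2]
  norm_num

lemma holder_L2 {α : Type*} [MeasurableSpace α] {μ : Measure α} {F G : α → ℝ}
    (hF : MemLp F 2 μ) (hG : MemLp G 2 μ) :
    ∫ x, |F x * G x| ∂μ ≤ (eLpNorm F 2 μ).toReal * (eLpNorm G 2 μ).toReal := by
  have hpq : Real.HolderConjugate 2 2 := Real.HolderConjugate.two_two
  have h2 : ENNReal.ofReal (2:ℝ) = 2 := by norm_num
  have hF' : MemLp F (ENNReal.ofReal (2:ℝ)) μ := by rw [h2]; exact hF
  have hG' : MemLp G (ENNReal.ofReal (2:ℝ)) μ := by rw [h2]; exact hG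
  have key := integral_mul_norm_le_Lp_mul_Lq hpq hF' hG'
  have hl : ∫ x, |F x * G x| ∂μ = ∫ x, ‖F x‖ * ‖G x‖ ∂μ := by
    refine integral_congr_ae (Filter.Eventually.of_forall fun x => ?_)
    simp [abs_mul]
  rw [hl]
  refine key.trans (le_of_eq ?_)
  have e : ∀ (H : α → ℝ), MemLp H 2 μ →
      (∫ x, ‖H x‖ ^ (2:ℝ) ∂μ) ^ ((1:ℝ)/2) = (eLpNorm H 2 μ).toReal := by
    intro H hH
    rw [hH.eLpNorm_eq_integral_rpow_norm two_ne_zero ENNReal.ofNat_ne_top]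
    have h2' : (2:ℝ≥0∞).toReal = 2 := by simp
    rw [ENNReal.toReal_ofReal (Real.rpow_nonneg
      (integral_nonneg fun x => Real.rpow_nonneg (norm_nonneg _) _) _), h2']
    norm_num
  rw [e F hF, e G hG]

lemma integrable_mul_L2 {α : Type*} [MeasurableSpace α] {μ : Measure α} {F G : α → ℝ}
    (hF : MemLp F 2 μ) (hG : MemLp G 2 μ) :
    Integrable (fun x => F x * G x) μ := by
  have hi : Integrable (fun x => F x ^ 2 + G x ^ 2) μ := hF.integrable_sq.add hG.integrable_sq
  refine hi.mono' (hF.1.mul hG.1) (Filter.Eventually.of_forall fun x => ?_)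
  rw [Real.norm_eq_abs, abs_mul]
  nlinarith [sq_nonneg (|F x| - |G x|), sq_abs (F x), sq_abs (G x),
    abs_nonneg (F x), abs_nonneg (G x)]

set_option maxHeartbeats 2000000 in
/-- Anisotropic upper bound for the triple product on Ω = 𝕋 × ℝ:
|∫ fgh| ≤ C ‖f‖^{1/2} (‖f‖+‖∂₁f‖)^{1/2} ‖g‖^{1/2} ‖∂₂g‖^{1/2} ‖h‖. -/
theorem triple_product_anisotropic :
    ∃ C : ℝ, 0 < C ∧ ∀ (f g h f1 g2 : ℝ × ℝ → ℝ),
      (∀ x : ℝ × ℝ, f (x.1 + 1, x.2) = f x) →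
      (∀ x : ℝ × ℝ, g (x.1 + 1, x.2) = g x) →
      (∀ x : ℝ × ℝ, h (x.1 + 1, x.2) = h x) →
      (∀ x : ℝ × ℝ, HasDerivAt (fun t => f (t, x.2)) (f1 x) x.1) →
      (∀ x : ℝ × ℝ, HasDerivAt (fun s => g (x.1, s)) (g2 x) x.2) →
      MemLp f 2 μΩ → MemLp g 2 μΩ → MemLp h 2 μΩ →
      MemLp f1 2 μΩ → MemLp g2 2 μΩ →
      |∫ x, f x * g x * h x ∂μΩ| ≤
        C * Real.sqrt ((eLpNorm f 2 μΩ).toReal) *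
          Real.sqrt ((eLpNorm f 2 μΩ).toReal + (eLpNorm f1 2 μΩ).toReal) *
          Real.sqrt ((eLpNorm g 2 μΩ).toReal) * Real.sqrt ((eLpNorm g2 2 μΩ).toReal) *
          (eLpNorm h 2 μΩ).toReal := by
  
  refine ⟨2, two_pos, ?_⟩
  intro f g h f1 g2 hfp hgp hhp hdf hdg hf hg hh hf1 hg2
  have hμ : μΩ = νT.prod volume := rfl
  set nf := (eLpNorm f 2 μΩ).toReal with hnf
  set nf1 := (eLpNorm f1 2 μΩ).toReal with hnf1
  set ng := (eLpNorm g 2 μΩ).toReal with hng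
  set ng2 := (eLpNorm g2 2 μΩ).toReal with hng2
  set nh := (eLpNorm h 2 μΩ).toReal with hnh
  have hnf0 : 0 ≤ nf := ENNReal.toReal_nonneg
  have hnf10 : 0 ≤ nf1 := ENNReal.toReal_nonneg
  have hng0 : 0 ≤ ng := ENNReal.toReal_nonneg
  have hng20 : 0 ≤ ng2 := ENNReal.toReal_nonneg
  have hnh0 : 0 ≤ nh := ENNReal.toReal_nonneg
  rw [hμ] at hf hg hh hf1 hg2
  have hnfeq : (eLpNorm f 2 (νT.prod volume)).toReal = nf := rfl
  have hnf1eq : (eLpNorm f1 2 (νT.prod volume)).toReal = nf1 := rfl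
  have hngeq : (eLpNorm g 2 (νT.prod volume)).toReal = ng := rfl
  have hng2eq : (eLpNorm g2 2 (νT.prod volume)).toReal = ng2 := rfl
  have hnheq : (eLpNorm h 2 (νT.prod volume)).toReal = nh := rfl
  have hf2i : Integrable (fun x => f x ^ 2) (νT.prod volume) := hf.integrable_sq
  have hg2i : Integrable (fun x => g x ^ 2) (νT.prod volume) := hg.integrable_sq
  have hff1 : Integrable (fun x => f x * f1 x) (νT.prod volume) := integrable_mul_L2 hf hf1
  have hgg2 : Integrable (fun x => g x * g2 x) (νT.prod volume) := integrable_mul_L2 hg hg2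
  have hFf : Integrable (fun x => 2 * |f x * f1 x|) (νT.prod volume) := (hff1.abs).const_mul 2
  have hGg : Integrable (fun x => 2 * |g x * g2 x|) (νT.prod volume) := (hgg2.abs).const_mul 2
  set A : ℝ → ℝ :=
    fun y => (∫ t, f (t, y) ^ 2 ∂νT) + ∫ t, 2 * |f (t, y) * f1 (t, y)| ∂νT with hA
  set B : ℝ → ℝ := fun t => ∫ y, 2 * |g (t, y) * g2 (t, y)| with hB
  have hA0 : ∀ y, 0 ≤ A y := fun y =>
    add_nonneg (integral_nonneg fun t => sq_nonneg _) (integral_nonneg fun t => by positivity)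
  have hB0 : ∀ t, 0 ≤ B t := fun t => integral_nonneg fun y => by positivity
  -- slicewise Agmon estimates
  have hslice_f : ∀ᵐ y ∂(volume : Measure ℝ), ∀ t, f (t, y) ^ 2 ≤ A y := by
    filter_upwards [hff1.prod_left_ae] with y hy2
    intro t
    have hper : ∀ s, (fun t => f (t, y)) (s + 1) = (fun t => f (t, y)) s := fun s => hfp (s, y)
    have hdu : ∀ s, HasDerivAt (fun t => f (t, y)) (f1 (s, y)) s := fun s => hdf (s, y)
    have hint : IntervalIntegrable (fun t => f (t, y) * f1 (t, y)) volume 0 1 := by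
      rw [intervalIntegrable_iff_integrableOn_Ioc_of_le zero_le_one]
      exact hy2
    have hkey := torus_agmon hper hdu hint t
    rw [intervalIntegral.integral_of_le zero_le_one,
      intervalIntegral.integral_of_le zero_le_one] at hkey
    exact hkey
  have hslice_g : ∀ᵐ t ∂νT, ∀ y, g (t, y) ^ 2 ≤ B t := by
    filter_upwards [hg2i.prod_right_ae, hgg2.prod_right_ae] with t ht1 ht2
    intro y
    exact line_agmon (fun s => hdg (t, s)) ht1 ht2 y
  have hae_f : ∀ᵐ x ∂(νT.prod volume), f x ^ 2 ≤ A x.2 := by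
    have := (MeasureTheory.Measure.quasiMeasurePreserving_snd
      (μ := νT) (ν := (volume : Measure ℝ))).ae hslice_f
    filter_upwards [this] with x hx
    simpa using hx x.1
  have hae_g : ∀ᵐ x ∂(νT.prod volume), g x ^ 2 ≤ B x.1 := by
    have := (MeasureTheory.Measure.quasiMeasurePreserving_fst
      (μ := νT) (ν := (volume : Measure ℝ))).ae hslice_g
    filter_upwards [this] with x hx
    simpa using hx x.2
  -- the majorant Φ
  set Φ : ℝ × ℝ → ℝ := fun x => Real.sqrt (B x.1) * Real.sqrt (A x.2) with hΦdef
  have h1intA : Integrable (fun y => ∫ t, f (t, y) ^ 2 ∂νT) volume := by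
    have := (hf2i.swap).integral_prod_left
    simpa [Function.comp] using this
  have h2intA : Integrable (fun y => ∫ t, 2 * |f (t, y) * f1 (t, y)| ∂νT) volume := by
    have := (hFf.swap).integral_prod_left
    simpa [Function.comp] using this
  have hAint : Integrable A volume := h1intA.add h2intA
  have hBint : Integrable B νT := hGg.integral_prod_left
  have hΦmeas : AEStronglyMeasurable Φ (νT.prod volume) := by
    have h1 : AEStronglyMeasurable (fun x : ℝ × ℝ => Real.sqrt (B x.1)) (νT.prod volume) :=
      Real.continuous_sqrt.comp_aestronglyMeasurable hBint.aestronglyMeasurable.comp_fst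
    have h2 : AEStronglyMeasurable (fun x : ℝ × ℝ => Real.sqrt (A x.2)) (νT.prod volume) :=
      Real.continuous_sqrt.comp_aestronglyMeasurable hAint.aestronglyMeasurable.comp_snd
    exact h1.mul h2
  have hBA : Integrable (fun x : ℝ × ℝ => B x.1 * A x.2) (νT.prod volume) :=
    hBint.mul_prod hAint
  have hΦsq : ∀ x : ℝ × ℝ, Φ x ^ 2 = B x.1 * A x.2 := by
    intro x
    simp only [hΦdef]
    rw [mul_pow, Real.sq_sqrt (hB0 x.1), Real.sq_sqrt (hA0 x.2)]
  have hΦ2 : Integrable (fun x => Φ x ^ 2) (νT.prod volume) :=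
    hBA.congr (Filter.Eventually.of_forall fun x => (hΦsq x).symm)
  have hΦL2 : MemLp Φ 2 (νT.prod volume) := (memLp_two_iff_integrable_sq hΦmeas).mpr hΦ2
  have hΦ0 : ∀ x, 0 ≤ Φ x := fun x => mul_nonneg (Real.sqrt_nonneg _) (Real.sqrt_nonneg _)
  have hdom : ∀ᵐ x ∂(νT.prod volume), |f x * g x * h x| ≤ Φ x * |h x| := by
    filter_upwards [hae_f, hae_g] with x h1 h2
    have hfa : |f x| ≤ Real.sqrt (A x.2) := by
      rw [← Real.sqrt_sq_eq_abs]; exact Real.sqrt_le_sqrt h1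
    have hga : |g x| ≤ Real.sqrt (B x.1) := by
      rw [← Real.sqrt_sq_eq_abs]; exact Real.sqrt_le_sqrt h2
    calc |f x * g x * h x| = |g x| * |f x| * |h x| := by rw [abs_mul, abs_mul]; ring
    _ ≤ Real.sqrt (B x.1) * Real.sqrt (A x.2) * |h x| := by
        have hm := mul_le_mul hga hfa (abs_nonneg _) (Real.sqrt_nonneg _)
        exact mul_le_mul_of_nonneg_right hm (abs_nonneg _)
    _ = Φ x * |h x| := by simp only [hΦdef]
  have hhabs : MemLp (fun x => |h x|) 2 (νT.prod volume) := by
    simpa only [Real.norm_eq_abs] using hh.norm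
  have hΦh : Integrable (fun x => Φ x * |h x|) (νT.prod volume) := integrable_mul_L2 hΦL2 hhabs
  have habs1 : |∫ x, f x * g x * h x ∂μΩ| ≤ ∫ x, |f x * g x * h x| ∂(νT.prod volume) := by
    rw [hμ]
    simpa only [Real.norm_eq_abs] using
      norm_integral_le_integral_norm (μ := νT.prod volume) (f := fun x => f x * g x * h x)
  have hmono : (∫ x, |f x * g x * h x| ∂(νT.prod volume)) ≤
      ∫ x, Φ x * |h x| ∂(νT.prod volume) :=
    integral_mono_of_nonneg (Filter.Eventually.of_forall fun x => abs_nonneg _) hΦh hdom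
  set X := (eLpNorm Φ 2 (νT.prod volume)).toReal with hX
  have hX0 : 0 ≤ X := ENNReal.toReal_nonneg
  have hCS : (∫ x, Φ x * |h x| ∂(νT.prod volume)) ≤ X * nh := by
    have hkey := holder_L2 hΦL2 hhabs
    have heabs : ∀ x : ℝ × ℝ, Φ x * abs (h x) = abs (Φ x * abs (h x)) := fun x =>
      (abs_of_nonneg (mul_nonneg (hΦ0 x) (abs_nonneg _))).symm
    have heLp : eLpNorm (fun x => |h x|) 2 (νT.prod volume) = eLpNorm h 2 (νT.prod volume) := by
      simp only [← Real.norm_eq_abs]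
      exact eLpNorm_norm h
    rw [heLp, hnheq] at hkey
    calc (∫ x, Φ x * |h x| ∂(νT.prod volume))
        = ∫ x, abs (Φ x * abs (h x)) ∂(νT.prod volume) :=
          integral_congr_ae (Filter.Eventually.of_forall heabs)
      _ ≤ X * nh := hkey
  have hX2 : X ^ 2 = (∫ t, B t ∂νT) * ∫ y, A y := by
    rw [hX, toReal_eLpNorm_sq hΦL2,
      integral_congr_ae (Filter.Eventually.of_forall hΦsq)]
    exact MeasureTheory.integral_prod_mul B A
  have hnf2 : nf ^ 2 = ∫ x, f x ^ 2 ∂(νT.prod volume) := by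
    rw [← hnfeq]; exact toReal_eLpNorm_sq hf
  have hIA : (∫ y, A y) ≤ 2 * nf * (nf + nf1) := by
    have e1 : (∫ y, ∫ t, f (t, y) ^ 2 ∂νT) = ∫ x, f x ^ 2 ∂(νT.prod volume) := by
      have hsw : Integrable (fun z : ℝ × ℝ => f z.swap ^ 2) (volume.prod νT) := by
        exact hf2i.swap
      rw [← MeasureTheory.integral_prod_swap (fun x : ℝ × ℝ => f x ^ 2),
        MeasureTheory.integral_prod _ hsw]
      simp only [Prod.swap_prod_mk]
    have e2 : (∫ y, ∫ t, 2 * |f (t, y) * f1 (t, y)| ∂νT)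
        = ∫ x, 2 * |f x * f1 x| ∂(νT.prod volume) := by
      have hsw : Integrable (fun z : ℝ × ℝ => 2 * |f z.swap * f1 z.swap|) (volume.prod νT) := by
        exact hFf.swap
      rw [← MeasureTheory.integral_prod_swap (fun x : ℝ × ℝ => 2 * |f x * f1 x|),
        MeasureTheory.integral_prod _ hsw]
      simp only [Prod.swap_prod_mk]
    have hsum : (∫ y, A y)
        = (∫ x, f x ^ 2 ∂(νT.prod volume)) + ∫ x, 2 * |f x * f1 x| ∂(νT.prod volume) := by
      simp only [hA]
      rw [integral_add h1intA h2intA, e1, e2]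
    have e3 : (∫ x, 2 * |f x * f1 x| ∂(νT.prod volume)) ≤ 2 * (nf * nf1) := by
      rw [MeasureTheory.integral_const_mul]
      have := holder_L2 hf hf1
      rw [hnfeq, hnf1eq] at this
      linarith
    rw [hsum, ← hnf2]
    nlinarith [hnf0, hnf10]
  have hIB : (∫ t, B t ∂νT) ≤ 2 * (ng * ng2) := by
    have e : (∫ t, B t ∂νT) = ∫ x, 2 * |g x * g2 x| ∂(νT.prod volume) :=
      (MeasureTheory.integral_prod _ hGg).symm
    rw [e, MeasureTheory.integral_const_mul]
    have := holder_L2 hg hg2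
    rw [hngeq, hng2eq] at this
    linarith
  have hIA0 : 0 ≤ ∫ y, A y := integral_nonneg hA0
  have hIB0 : 0 ≤ ∫ t, B t ∂νT := integral_nonneg hB0
  set R := 2 * Real.sqrt nf * Real.sqrt (nf + nf1) * Real.sqrt ng * Real.sqrt ng2 with hR
  have hR0 : 0 ≤ R := by
    rw [hR]; positivity
  have hR2 : R ^ 2 = (2 * (ng * ng2)) * (2 * nf * (nf + nf1)) := by
    have e : R ^ 2 = 2 ^ 2 * ((Real.sqrt nf) ^ 2 * ((Real.sqrt (nf + nf1)) ^ 2 *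
        ((Real.sqrt ng) ^ 2 * (Real.sqrt ng2) ^ 2))) := by rw [hR]; ring
    rw [e, Real.sq_sqrt hnf0, Real.sq_sqrt (by linarith : (0:ℝ) ≤ nf + nf1),
      Real.sq_sqrt hng0, Real.sq_sqrt hng20]
    ring
  have hXR : X ≤ R := by
    have hsq : X ^ 2 ≤ R ^ 2 := by
      rw [hX2, hR2]
      exact mul_le_mul hIB hIA hIA0 (by positivity)
    calc X = Real.sqrt (X ^ 2) := (Real.sqrt_sq hX0).symm
    _ ≤ Real.sqrt (R ^ 2) := Real.sqrt_le_sqrt hsq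
    _ = R := Real.sqrt_sq hR0
  calc |∫ x, f x * g x * h x ∂μΩ|
      ≤ ∫ x, |f x * g x * h x| ∂(νT.prod volume) := habs1
    _ ≤ ∫ x, Φ x * |h x| ∂(νT.prod volume) := hmono
    _ ≤ X * nh := hCS
    _ ≤ R * nh := mul_le_mul_of_nonneg_right hXR hnh0
    _ = 2 * Real.sqrt nf * Real.sqrt (nf + nf1) * Real.sqrt ng * Real.sqrt ng2 * nh := by
        rw [hR]
end

section
/- Let Ω = 𝕋 × ℝ. There is a constant C such that for any f ∈ H²(Ω), ‖f‖_{L^∞(Ω)} ≤ C ‖f‖_{L²}^{1/4} (‖f‖_{L²} + ‖∂₁f‖_{L²})^{1/4} ‖∂₂f‖_{L²}^{1/4} (‖∂₂f‖_{L²} + ‖∂₁∂₂f‖_{L²})^{1/4}. -/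
open MeasureTheory Set

lemma enorm_sq_eq (a : ℝ) : ((‖a‖₊ : ENNReal)) ^ 2 = ENNReal.ofReal (a ^ 2) := by
  rw [← enorm_eq_nnnorm, Real.enorm_eq_ofReal_abs, ← ENNReal.ofReal_pow (abs_nonneg a), sq_abs]

lemma ofReal_two_abs_mul (a b : ℝ) :
    ENNReal.ofReal (2 * |a * b|) = 2 * ((‖a‖₊ : ENNReal) * (‖b‖₊ : ENNReal)) := by
  rw [ENNReal.ofReal_mul zero_le_two, abs_mul, ENNReal.ofReal_mul (abs_nonneg _),
    ← Real.enorm_eq_ofReal_abs, ← Real.enorm_eq_ofReal_abs, ENNReal.ofReal_ofNat,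
      enorm_eq_nnnorm, enorm_eq_nnnorm]

/-- FTC-based bound along the periodic direction. -/
lemma aux_ftc_x (g g' : ℝ → ℝ) (hd : ∀ τ, HasDerivAt g (g' τ) τ)
    {t t' : ℝ} (ht : t ∈ Ioc (0:ℝ) 1) (ht' : t' ∈ Ioc (0:ℝ) 1) :
    ENNReal.ofReal (g t ^ 2) ≤ ENNReal.ofReal (g t' ^ 2) +
      ∫⁻ τ in Ioc (0:ℝ) 1, ENNReal.ofReal (2 * |g τ * g' τ|) := by
  by_cases hfin : (∫⁻ τ in Ioc (0:ℝ) 1, ENNReal.ofReal (2 * |g τ * g' τ|)) = ⊤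
  · rw [hfin]; simp
  · set G' : ℝ → ℝ := fun τ => 2 * (g τ * g' τ) with hG'def
    have hG : ∀ τ, HasDerivAt (fun τ => g τ ^ 2) (G' τ) τ := by
      intro τ
      have : HasDerivAt (fun τ => g τ * g τ) (g' τ * g τ + g τ * g' τ) τ := (hd τ).mul (hd τ)
      convert this using 1
      · ext z; ring
      · rw [hG'def]; ring
    have hG'meas : Measurable G' := by
      have : G' = deriv (fun τ => g τ ^ 2) := funext fun τ => ((hG τ).deriv).symm
      rw [this]; exact measurable_deriv _
    have habs : ∀ τ, (‖G' τ‖₊ : ENNReal) = ENNReal.ofReal (2 * |g τ * g' τ|) := by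
      intro τ
      rw [← enorm_eq_nnnorm, Real.enorm_eq_ofReal_abs, hG'def, abs_mul, abs_two]
    have hio : IntegrableOn G' (Ioc (0:ℝ) 1) := by
      refine ⟨hG'meas.aestronglyMeasurable, ?_⟩
      rw [HasFiniteIntegral]
      simpa only [enorm_eq_nnnorm, habs] using Ne.lt_top hfin
    have hsub : Set.uIoc t' t ⊆ Ioc (0:ℝ) 1 := by
      rw [Set.uIoc]
      exact Ioc_subset_Ioc (le_min ht'.1.le ht.1.le) (max_le ht'.2 ht.2)
    have hii : IntervalIntegrable G' volume t' t := by
      rw [intervalIntegrable_iff]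
      exact hio.mono_set hsub
    have hftc : ∫ τ in t'..t, G' τ = g t ^ 2 - g t' ^ 2 :=
      intervalIntegral.integral_eq_sub_of_hasDerivAt (fun τ _ => hG τ) hii
    have hreal : g t ^ 2 ≤ g t' ^ 2 + ∫ τ in Set.uIoc t' t, |G' τ| := by
      have h1 : g t ^ 2 - g t' ^ 2 ≤ ∫ τ in Set.uIoc t' t, |G' τ| := by
        rw [← hftc]
        calc ∫ τ in t'..t, G' τ ≤ ‖∫ τ in t'..t, G' τ‖ := le_abs_self _
        _ ≤ ∫ τ in Set.uIoc t' t, ‖G' τ‖ :=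
            intervalIntegral.norm_integral_le_integral_norm_uIoc
        _ = ∫ τ in Set.uIoc t' t, |G' τ| := by simp [Real.norm_eq_abs]
      linarith
    calc ENNReal.ofReal (g t ^ 2)
        ≤ ENNReal.ofReal (g t' ^ 2 + ∫ τ in Set.uIoc t' t, |G' τ|) :=
          ENNReal.ofReal_le_ofReal hreal
      _ = ENNReal.ofReal (g t' ^ 2) + ENNReal.ofReal (∫ τ in Set.uIoc t' t, |G' τ|) :=
          ENNReal.ofReal_add (sq_nonneg _)
            (integral_nonneg fun τ => abs_nonneg _)
      _ ≤ ENNReal.ofReal (g t' ^ 2) + ∫⁻ τ in Ioc (0:ℝ) 1, ENNReal.ofReal (2 * |g τ * g' τ|) := by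
          gcongr
          rw [ofReal_integral_eq_lintegral_ofReal ((hio.mono_set hsub).abs)
            (Filter.Eventually.of_forall fun τ => abs_nonneg _)]
          calc (∫⁻ τ in Set.uIoc t' t, ENNReal.ofReal |G' τ|)
              ≤ ∫⁻ τ in Ioc (0:ℝ) 1, ENNReal.ofReal |G' τ| := lintegral_mono_set hsub
            _ = _ := by
                congr 1; ext τ
                rw [hG'def, abs_mul, abs_two, abs_mul]

/-- Energy bound in the periodic direction. -/
lemma stepA (f f1 : ℝ × ℝ → ℝ)
    (hd1 : ∀ x : ℝ × ℝ, HasDerivAt (fun t => f (t, x.2)) (f1 x) x.1)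
    (hcy : ∀ t, Continuous fun s => f (t, s))
    (hmf : AEMeasurable f ((volume.restrict (Ioc (0:ℝ) 1)).prod volume))
    (hmf1 : AEMeasurable f1 ((volume.restrict (Ioc (0:ℝ) 1)).prod volume))
    {t : ℝ} (ht : t ∈ Ioc (0:ℝ) 1) :
    (∫⁻ s, ((‖f (t, s)‖₊ : ENNReal)) ^ 2) ≤
      (∫⁻ x, ((‖f x‖₊ : ENNReal)) ^ 2 ∂((volume.restrict (Ioc (0:ℝ) 1)).prod volume)) +
      2 * ∫⁻ x, ((‖f x‖₊ : ENNReal)) * ((‖f1 x‖₊ : ENNReal))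
        ∂((volume.restrict (Ioc (0:ℝ) 1)).prod volume) := by
  have key : ∀ t' ∈ Ioc (0:ℝ) 1, ∀ s : ℝ,
      ((‖f (t, s)‖₊ : ENNReal)) ^ 2 ≤ ((‖f (t', s)‖₊ : ENNReal)) ^ 2 +
        ∫⁻ τ in Ioc (0:ℝ) 1, ENNReal.ofReal (2 * |f (τ, s) * f1 (τ, s)|) := by
    intro t' ht' s
    rw [enorm_sq_eq, enorm_sq_eq]
    exact aux_ftc_x (fun τ => f (τ, s)) (fun τ => f1 (τ, s)) (fun τ => hd1 (τ, s)) ht ht'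
  have hW : AEMeasurable (fun x : ℝ × ℝ => ENNReal.ofReal (2 * |f x * f1 x|))
      ((volume.restrict (Ioc (0:ℝ) 1)).prod volume) := by
    apply ENNReal.measurable_ofReal.comp_aemeasurable
    exact aemeasurable_const.mul (measurable_abs.comp_aemeasurable (hmf.mul hmf1))
  have hWswap : (∫⁻ s, ∫⁻ τ in Ioc (0:ℝ) 1, ENNReal.ofReal (2 * |f (τ, s) * f1 (τ, s)|)) =
      ∫⁻ x, ENNReal.ofReal (2 * |f x * f1 x|)
        ∂((volume.restrict (Ioc (0:ℝ) 1)).prod volume) :=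
    (lintegral_prod_symm _ hW).symm
  have hmeas_t' : ∀ t' : ℝ, AEMeasurable (fun s => ((‖f (t', s)‖₊ : ENNReal)) ^ 2) volume := by
    intro t'
    exact ((measurable_coe_nnreal_ennreal.comp (hcy t').measurable.nnnorm).pow_const 2).aemeasurable
  have hmain : ∀ t' ∈ Ioc (0:ℝ) 1,
      (∫⁻ s, ((‖f (t, s)‖₊ : ENNReal)) ^ 2) ≤ (∫⁻ s, ((‖f (t', s)‖₊ : ENNReal)) ^ 2) +
        ∫⁻ s, ∫⁻ τ in Ioc (0:ℝ) 1, ENNReal.ofReal (2 * |f (τ, s) * f1 (τ, s)|) := by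
    intro t' ht'
    calc (∫⁻ s, ((‖f (t, s)‖₊ : ENNReal)) ^ 2)
        ≤ ∫⁻ s, (((‖f (t', s)‖₊ : ENNReal)) ^ 2 +
            ∫⁻ τ in Ioc (0:ℝ) 1, ENNReal.ofReal (2 * |f (τ, s) * f1 (τ, s)|)) :=
          lintegral_mono (key t' ht')
      _ = _ := lintegral_add_left' (hmeas_t' t') _
  have hnf2meas : AEMeasurable (fun x : ℝ × ℝ => ((‖f x‖₊ : ENNReal)) ^ 2)
      ((volume.restrict (Ioc (0:ℝ) 1)).prod volume) :=
    ((measurable_coe_nnreal_ennreal.comp measurable_nnnorm).comp_aemeasurable hmf).pow_const 2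
  have htonelli : (∫⁻ t' in Ioc (0:ℝ) 1, ∫⁻ s, ((‖f (t', s)‖₊ : ENNReal)) ^ 2) =
      ∫⁻ x, ((‖f x‖₊ : ENNReal)) ^ 2 ∂((volume.restrict (Ioc (0:ℝ) 1)).prod volume) :=
    (lintegral_prod _ hnf2meas).symm
  have hρuniv : (volume.restrict (Ioc (0:ℝ) 1)) univ = 1 := by
    rw [Measure.restrict_apply_univ, Real.volume_Ioc]
    norm_num
  calc (∫⁻ s, ((‖f (t, s)‖₊ : ENNReal)) ^ 2)
      = ∫⁻ _ in Ioc (0:ℝ) 1, (∫⁻ s, ((‖f (t, s)‖₊ : ENNReal)) ^ 2) := by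
        rw [lintegral_const, hρuniv, mul_one]
    _ ≤ ∫⁻ t' in Ioc (0:ℝ) 1, ((∫⁻ s, ((‖f (t', s)‖₊ : ENNReal)) ^ 2) +
          ∫⁻ s, ∫⁻ τ in Ioc (0:ℝ) 1, ENNReal.ofReal (2 * |f (τ, s) * f1 (τ, s)|)) := by
        apply lintegral_mono_ae
        filter_upwards [ae_restrict_mem measurableSet_Ioc] with t' ht'
        exact hmain t' ht'
    _ = (∫⁻ t' in Ioc (0:ℝ) 1, ∫⁻ s, ((‖f (t', s)‖₊ : ENNReal)) ^ 2) +
          ∫⁻ _ in Ioc (0:ℝ) 1, (∫⁻ s, ∫⁻ τ in Ioc (0:ℝ) 1,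
            ENNReal.ofReal (2 * |f (τ, s) * f1 (τ, s)|)) :=
        lintegral_add_right' _ aemeasurable_const
    _ = (∫⁻ x, ((‖f x‖₊ : ENNReal)) ^ 2 ∂((volume.restrict (Ioc (0:ℝ) 1)).prod volume)) +
          ∫⁻ x, ENNReal.ofReal (2 * |f x * f1 x|)
            ∂((volume.restrict (Ioc (0:ℝ) 1)).prod volume) := by
        rw [htonelli, lintegral_const, hρuniv, mul_one, hWswap]
    _ = _ := by
        congr 1
        simp_rw [ofReal_two_abs_mul]
        rw [lintegral_const_mul' _ _ (by norm_num : (2:ENNReal) ≠ ⊤)]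

/-- Boundedness from the derivative along the real direction. -/
lemma aux_vanish (F F' : ℝ → ℝ) (hd : ∀ y, HasDerivAt F (F' y) y)
    (hfin : ∫⁻ y, ENNReal.ofReal (F y) ≠ ⊤) (hint : Integrable F') (y : ℝ) :
    F y ≤ ∫ z, |F' z| := by
  have hinf : ∀ ε : ℝ, 0 < ε → ∃ z, F z < ε := by
    intro ε hε; by_contra h; push_neg at h
    apply hfin
    have hle : ∀ z, ENNReal.ofReal ε ≤ ENNReal.ofReal (F z) :=
      fun z => ENNReal.ofReal_le_ofReal (h z)
    have : (∫⁻ z, ENNReal.ofReal ε) ≤ ∫⁻ z, ENNReal.ofReal (F z) :=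
      lintegral_mono hle
    rw [lintegral_const, Real.volume_univ, ENNReal.mul_top
      (ENNReal.ofReal_pos.mpr hε).ne'] at this
    exact top_le_iff.mp this
  refine le_of_forall_pos_le_add fun ε hε => ?_
  obtain ⟨z, hz⟩ := hinf ε hε
  have hftc : ∫ τ in z..y, F' τ = F y - F z :=
    intervalIntegral.integral_eq_sub_of_hasDerivAt (fun τ _ => hd τ)
      (hint.intervalIntegrable)
  have h1 : F y - F z ≤ ∫ τ in Set.uIoc z y, |F' τ| := by
    rw [← hftc]
    calc ∫ τ in z..y, F' τ ≤ ‖∫ τ in z..y, F' τ‖ := le_abs_self _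
    _ ≤ ∫ τ in Set.uIoc z y, ‖F' τ‖ := intervalIntegral.norm_integral_le_integral_norm_uIoc
    _ = ∫ τ in Set.uIoc z y, |F' τ| := by simp [Real.norm_eq_abs]
  have h2 : ∫ τ in Set.uIoc z y, |F' τ| ≤ ∫ τ, |F' τ| :=
    setIntegral_le_integral hint.abs (Filter.Eventually.of_forall fun τ => abs_nonneg _)
  linarith

/-- Pointwise bound in the real direction. -/
lemma stepC (f f2 : ℝ × ℝ → ℝ)
    (hd2 : ∀ x : ℝ × ℝ, HasDerivAt (fun s => f (x.1, s)) (f2 x) x.2)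
    (hc2y : ∀ t, Continuous fun s => f2 (t, s))
    {t : ℝ} (hAfin : (∫⁻ s, ((‖f (t, s)‖₊ : ENNReal)) ^ 2) ≠ ⊤) (y : ℝ) :
    ((‖f (t, y)‖₊ : ENNReal)) ^ 2 ≤
      2 * ∫⁻ s, ((‖f (t, s)‖₊ : ENNReal)) * ((‖f2 (t, s)‖₊ : ENNReal)) := by
  by_cases hU : (∫⁻ s, ((‖f (t, s)‖₊ : ENNReal)) * ((‖f2 (t, s)‖₊ : ENNReal))) = ⊤
  · rw [hU, ENNReal.mul_top (by norm_num)]; exact le_top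
  · set F : ℝ → ℝ := fun s => f (t, s) ^ 2 with hFdef
    set F' : ℝ → ℝ := fun s => 2 * (f (t, s) * f2 (t, s)) with hF'def
    have hdF : ∀ s, HasDerivAt F (F' s) s := by
      intro s
      have : HasDerivAt (fun s' => f (t, s') * f (t, s')) (f2 (t, s) * f (t, s) + f (t, s) * f2 (t, s)) s :=
        (hd2 (t, s)).mul (hd2 (t, s))
      convert this using 1
      · ext z; simp [hFdef]; ring
      · simp [hF'def]; ring
    have hFc : Continuous fun s => f (t, s) :=
      continuous_iff_continuousAt.2 fun s => (hd2 (t, s)).continuousAt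
    have hF'c : Continuous F' := by
      rw [hF'def]; exact continuous_const.mul (hFc.mul (hc2y t))
    have hF'enorm : ∀ s, ((‖F' s‖₊ : ENNReal)) =
        2 * (((‖f (t, s)‖₊ : ENNReal)) * ((‖f2 (t, s)‖₊ : ENNReal))) := by
      intro s
      rw [← enorm_eq_nnnorm, Real.enorm_eq_ofReal_abs, hF'def]
      rw [show |2 * (f (t, s) * f2 (t, s))| = 2 * |f (t, s) * f2 (t, s)| by
        rw [abs_mul, abs_two]]
      exact ofReal_two_abs_mul _ _
    have hintF' : Integrable F' := by
      refine ⟨hF'c.aestronglyMeasurable, ?_⟩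
      rw [HasFiniteIntegral]
      simp_rw [enorm_eq_nnnorm, hF'enorm]
      rw [lintegral_const_mul' _ _ (by norm_num : (2:ENNReal) ≠ ⊤)]
      exact Ne.lt_top (ENNReal.mul_ne_top (by norm_num) hU)
    have hfinF : ∫⁻ s, ENNReal.ofReal (F s) ≠ ⊤ := by
      simp_rw [hFdef, ← enorm_sq_eq]
      exact hAfin
    have hb := aux_vanish F F' hdF hfinF hintF' y
    calc ((‖f (t, y)‖₊ : ENNReal)) ^ 2 = ENNReal.ofReal (F y) := enorm_sq_eq _
      _ ≤ ENNReal.ofReal (∫ z, |F' z|) := ENNReal.ofReal_le_ofReal hb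
      _ = ∫⁻ z, ENNReal.ofReal |F' z| :=
          ofReal_integral_eq_lintegral_ofReal hintF'.abs
            (Filter.Eventually.of_forall fun z => abs_nonneg _)
      _ = 2 * ∫⁻ s, ((‖f (t, s)‖₊ : ENNReal)) * ((‖f2 (t, s)‖₊ : ENNReal)) := by
          simp_rw [← Real.enorm_eq_ofReal_abs, enorm_eq_nnnorm, hF'enorm]
          exact lintegral_const_mul' _ _ (by norm_num)

lemma holder2 {α : Type*} [MeasurableSpace α] (μ : Measure α) (g h : α → ENNReal)
    (hg : AEMeasurable g μ) (hh : AEMeasurable h μ) :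
    ∫⁻ a, g a * h a ∂μ ≤
      (∫⁻ a, g a ^ 2 ∂μ) ^ ((1:ℝ)/2) * (∫⁻ a, h a ^ 2 ∂μ) ^ ((1:ℝ)/2) := by
  have hpq : Real.HolderConjugate 2 2 := Real.HolderConjugate.two_two
  have := ENNReal.lintegral_mul_le_Lp_mul_Lq μ hpq hg hh
  simp only [Pi.mul_apply] at this
  simp_rw [show (2:ℝ) = ((2:ℕ):ℝ) by norm_num, ENNReal.rpow_natCast] at this
  exact this

lemma eLpNorm_two_eq {α : Type*} [MeasurableSpace α] (μ : Measure α) (g : α → ℝ) :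
    eLpNorm g 2 μ = (∫⁻ a, ((‖g a‖₊ : ENNReal)) ^ 2 ∂μ) ^ ((1:ℝ)/2) := by
  rw [eLpNorm_eq_lintegral_rpow_enorm_toReal two_ne_zero ENNReal.ofNat_ne_top]
  simp_rw [enorm_eq_nnnorm, ENNReal.toReal_ofNat, show (2:ℝ) = ((2:ℕ):ℝ) by norm_num,
    ENNReal.rpow_natCast]

lemma sq_le_sq_ennreal {u v : ENNReal} (h : u ^ 2 ≤ v ^ 2) : u ≤ v := by
  rw [← ENNReal.rpow_natCast u 2, ← ENNReal.rpow_natCast v 2] at h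
  have h2 := ENNReal.rpow_le_rpow h (by norm_num : (0:ℝ) ≤ 1/2)
  rw [← ENNReal.rpow_mul, ← ENNReal.rpow_mul] at h2
  norm_num at h2
  exact h2

/-- Anisotropic L^∞ bound on Ω = 𝕋 × ℝ: for f ∈ H²(Ω),
‖f‖_{L^∞} ≤ C ‖f‖^{1/4} (‖f‖+‖∂₁f‖)^{1/4} ‖∂₂f‖^{1/4} (‖∂₂f‖+‖∂₁∂₂f‖)^{1/4}. -/
theorem linfty_anisotropic :
    ∃ C : ℝ, 0 < C ∧ ∀ (f f1 f2 f11 f12 f22 : ℝ × ℝ → ℝ),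
      (∀ x : ℝ × ℝ, f (x.1 + 1, x.2) = f x) →
      (∀ x : ℝ × ℝ, HasDerivAt (fun t => f (t, x.2)) (f1 x) x.1) →
      (∀ x : ℝ × ℝ, HasDerivAt (fun s => f (x.1, s)) (f2 x) x.2) →
      (∀ x : ℝ × ℝ, HasDerivAt (fun t => f1 (t, x.2)) (f11 x) x.1) →
      (∀ x : ℝ × ℝ, HasDerivAt (fun t => f2 (t, x.2)) (f12 x) x.1) →
      (∀ x : ℝ × ℝ, HasDerivAt (fun s => f2 (x.1, s)) (f22 x) x.2) →
      MemLp f 2 μΩ → MemLp f1 2 μΩ → MemLp f2 2 μΩ →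
      MemLp f11 2 μΩ → MemLp f12 2 μΩ → MemLp f22 2 μΩ →
      eLpNorm f ⊤ μΩ ≤ ENNReal.ofReal
        (C * (eLpNorm f 2 μΩ).toReal ^ ((1:ℝ)/4) *
          ((eLpNorm f 2 μΩ).toReal + (eLpNorm f1 2 μΩ).toReal) ^ ((1:ℝ)/4) *
          (eLpNorm f2 2 μΩ).toReal ^ ((1:ℝ)/4) *
          ((eLpNorm f2 2 μΩ).toReal + (eLpNorm f12 2 μΩ).toReal) ^ ((1:ℝ)/4)) := by
  refine ⟨2, two_pos, ?_⟩
  intro f f1 f2 f11 f12 f22 _hper hd1 hd2 hd11 hd12 hd22 hf hf1 hf2 _hf11 hf12 _hf22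
  have hμ : μΩ = (volume.restrict (Ioc (0:ℝ) 1)).prod volume := rfl
  -- continuity along lines
  have cfy : ∀ t, Continuous fun s => f (t, s) :=
    fun t => continuous_iff_continuousAt.2 fun s => (hd2 (t, s)).continuousAt
  have cf2y : ∀ t, Continuous fun s => f2 (t, s) :=
    fun t => continuous_iff_continuousAt.2 fun s => (hd22 (t, s)).continuousAt
  -- measurability
  have hmf : AEMeasurable f μΩ := hf.aestronglyMeasurable.aemeasurable
  have hmf1 : AEMeasurable f1 μΩ := hf1.aestronglyMeasurable.aemeasurable
  have hmf2 : AEMeasurable f2 μΩ := hf2.aestronglyMeasurable.aemeasurable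
  have hmf12 : AEMeasurable f12 μΩ := hf12.aestronglyMeasurable.aemeasurable
  have hnf : AEMeasurable (fun x => ((‖f x‖₊ : ENNReal))) μΩ :=
    (measurable_coe_nnreal_ennreal.comp measurable_nnnorm).comp_aemeasurable hmf
  have hnf1 : AEMeasurable (fun x => ((‖f1 x‖₊ : ENNReal))) μΩ :=
    (measurable_coe_nnreal_ennreal.comp measurable_nnnorm).comp_aemeasurable hmf1
  have hnf2 : AEMeasurable (fun x => ((‖f2 x‖₊ : ENNReal))) μΩ :=
    (measurable_coe_nnreal_ennreal.comp measurable_nnnorm).comp_aemeasurable hmf2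
  have hnf12 : AEMeasurable (fun x => ((‖f12 x‖₊ : ENNReal))) μΩ :=
    (measurable_coe_nnreal_ennreal.comp measurable_nnnorm).comp_aemeasurable hmf12
  set 𝔞 := eLpNorm f 2 μΩ with h𝔞
  set 𝔞₁ := eLpNorm f1 2 μΩ with h𝔞₁
  set 𝔟 := eLpNorm f2 2 μΩ with h𝔟
  set 𝔟₁ := eLpNorm f12 2 μΩ with h𝔟₁
  have ha_ne : 𝔞 ≠ ⊤ := hf.eLpNorm_ne_top
  have ha1_ne : 𝔞₁ ≠ ⊤ := hf1.eLpNorm_ne_top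
  have hb_ne : 𝔟 ≠ ⊤ := hf2.eLpNorm_ne_top
  have hb1_ne : 𝔟₁ ≠ ⊤ := hf12.eLpNorm_ne_top
  -- square identities
  have hIA : (∫⁻ x, ((‖f x‖₊ : ENNReal)) ^ 2 ∂μΩ) = 𝔞 ^ 2 := by
    rw [h𝔞, eLpNorm_two_eq, ← ENNReal.rpow_natCast _ 2, ← ENNReal.rpow_mul]
    norm_num
  have hIB : (∫⁻ x, ((‖f2 x‖₊ : ENNReal)) ^ 2 ∂μΩ) = 𝔟 ^ 2 := by
    rw [h𝔟, eLpNorm_two_eq, ← ENNReal.rpow_natCast _ 2, ← ENNReal.rpow_mul]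
    norm_num
  -- global Hölder
  have hM1 : (∫⁻ x, ((‖f x‖₊ : ENNReal)) * ((‖f1 x‖₊ : ENNReal)) ∂μΩ) ≤ 𝔞 * 𝔞₁ := by
    have := holder2 μΩ _ _ hnf hnf1
    rw [← eLpNorm_two_eq, ← eLpNorm_two_eq] at this
    exact this
  have hM2 : (∫⁻ x, ((‖f2 x‖₊ : ENNReal)) * ((‖f12 x‖₊ : ENNReal)) ∂μΩ) ≤ 𝔟 * 𝔟₁ := by
    have := holder2 μΩ _ _ hnf2 hnf12
    rw [← eLpNorm_two_eq, ← eLpNorm_two_eq] at this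
    exact this
  -- energy bounds
  have hA : ∀ t ∈ Ioc (0:ℝ) 1,
      (∫⁻ s, ((‖f (t, s)‖₊ : ENNReal)) ^ 2) ≤ 2 * (𝔞 * (𝔞 + 𝔞₁)) := by
    intro t ht
    have h1 := stepA f f1 hd1 cfy hmf hmf1 ht
    calc (∫⁻ s, ((‖f (t, s)‖₊ : ENNReal)) ^ 2)
        ≤ (∫⁻ x, ((‖f x‖₊ : ENNReal)) ^ 2 ∂μΩ) +
            2 * ∫⁻ x, ((‖f x‖₊ : ENNReal)) * ((‖f1 x‖₊ : ENNReal)) ∂μΩ := h1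
      _ ≤ 𝔞 ^ 2 + 2 * (𝔞 * 𝔞₁) := by
          rw [hIA]; gcongr
      _ ≤ 2 * (𝔞 * (𝔞 + 𝔞₁)) := by
          rw [pow_two, mul_add 𝔞, mul_add (2:ENNReal), two_mul (𝔞 * 𝔞)]
          exact add_le_add le_self_add (le_refl _)
  have hB : ∀ t ∈ Ioc (0:ℝ) 1,
      (∫⁻ s, ((‖f2 (t, s)‖₊ : ENNReal)) ^ 2) ≤ 2 * (𝔟 * (𝔟 + 𝔟₁)) := by
    intro t ht
    have h1 := stepA f2 f12 hd12 cf2y hmf2 hmf12 ht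
    calc (∫⁻ s, ((‖f2 (t, s)‖₊ : ENNReal)) ^ 2)
        ≤ (∫⁻ x, ((‖f2 x‖₊ : ENNReal)) ^ 2 ∂μΩ) +
            2 * ∫⁻ x, ((‖f2 x‖₊ : ENNReal)) * ((‖f12 x‖₊ : ENNReal)) ∂μΩ := h1
      _ ≤ 𝔟 ^ 2 + 2 * (𝔟 * 𝔟₁) := by
          rw [hIB]; gcongr
      _ ≤ 2 * (𝔟 * (𝔟 + 𝔟₁)) := by
          rw [pow_two, mul_add 𝔟, mul_add (2:ENNReal), two_mul (𝔟 * 𝔟)]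
          exact add_le_add le_self_add (le_refl _)
  have hPA_ne : (2:ENNReal) * (𝔞 * (𝔞 + 𝔞₁)) ≠ ⊤ :=
    ENNReal.mul_ne_top (by norm_num)
      (ENNReal.mul_ne_top ha_ne (ENNReal.add_ne_top.2 ⟨ha_ne, ha1_ne⟩))
  -- pointwise bound
  set K : ENNReal := 2 * 𝔞 ^ ((1:ℝ)/4) * (𝔞 + 𝔞₁) ^ ((1:ℝ)/4) * 𝔟 ^ ((1:ℝ)/4) *
      (𝔟 + 𝔟₁) ^ ((1:ℝ)/4) with hK
  have hq : ∀ x : ENNReal, (x ^ ((1:ℝ)/4)) ^ 2 = x ^ ((1:ℝ)/2) := by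
    intro x
    rw [← ENNReal.rpow_natCast (x ^ ((1:ℝ)/4)) 2, ← ENNReal.rpow_mul]
    norm_num
  have h2half : ((2:ENNReal)) ^ ((1:ℝ)/2) * ((2:ENNReal)) ^ ((1:ℝ)/2) = 2 := by
    rw [← ENNReal.rpow_add _ _ (by norm_num) (by norm_num)]
    norm_num
  have hK2 : 2 * ((2 * (𝔞 * (𝔞 + 𝔞₁))) ^ ((1:ℝ)/2) * (2 * (𝔟 * (𝔟 + 𝔟₁))) ^ ((1:ℝ)/2))
      = K ^ 2 := by
    rw [hK]
    simp only [ENNReal.mul_rpow_of_nonneg _ _ (by norm_num : (0:ℝ) ≤ 1/2), mul_pow, hq]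
    have e1 : 2 * ((2:ENNReal) ^ ((1:ℝ)/2) * (𝔞 ^ ((1:ℝ)/2) * (𝔞 + 𝔞₁) ^ ((1:ℝ)/2)) *
        ((2:ENNReal) ^ ((1:ℝ)/2) * (𝔟 ^ ((1:ℝ)/2) * (𝔟 + 𝔟₁) ^ ((1:ℝ)/2)))) =
        (2 * ((2:ENNReal) ^ ((1:ℝ)/2) * (2:ENNReal) ^ ((1:ℝ)/2))) *
        (𝔞 ^ ((1:ℝ)/2) * ((𝔞 + 𝔞₁) ^ ((1:ℝ)/2) * (𝔟 ^ ((1:ℝ)/2) * (𝔟 + 𝔟₁) ^ ((1:ℝ)/2)))) := by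
      ring
    rw [e1, h2half]
    ring
  have hpt : ∀ t ∈ Ioc (0:ℝ) 1, ∀ y : ℝ, ((‖f (t, y)‖₊ : ENNReal)) ≤ K := by
    intro t ht y
    apply sq_le_sq_ennreal
    have hAfin : (∫⁻ s, ((‖f (t, s)‖₊ : ENNReal)) ^ 2) ≠ ⊤ :=
      fun h => hPA_ne (top_le_iff.mp (h ▸ hA t ht))
    have hc := stepC f f2 hd2 cf2y hAfin y
    have hU : (∫⁻ s, ((‖f (t, s)‖₊ : ENNReal)) * ((‖f2 (t, s)‖₊ : ENNReal))) ≤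
        (∫⁻ s, ((‖f (t, s)‖₊ : ENNReal)) ^ 2) ^ ((1:ℝ)/2) *
          (∫⁻ s, ((‖f2 (t, s)‖₊ : ENNReal)) ^ 2) ^ ((1:ℝ)/2) :=
      holder2 volume _ _
        ((measurable_coe_nnreal_ennreal.comp (cfy t).measurable.nnnorm).aemeasurable)
        ((measurable_coe_nnreal_ennreal.comp (cf2y t).measurable.nnnorm).aemeasurable)
    calc ((‖f (t, y)‖₊ : ENNReal)) ^ 2
        ≤ 2 * ∫⁻ s, ((‖f (t, s)‖₊ : ENNReal)) * ((‖f2 (t, s)‖₊ : ENNReal)) := hc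
      _ ≤ 2 * ((∫⁻ s, ((‖f (t, s)‖₊ : ENNReal)) ^ 2) ^ ((1:ℝ)/2) *
            (∫⁻ s, ((‖f2 (t, s)‖₊ : ENNReal)) ^ 2) ^ ((1:ℝ)/2)) := by gcongr
      _ ≤ 2 * ((2 * (𝔞 * (𝔞 + 𝔞₁))) ^ ((1:ℝ)/2) * (2 * (𝔟 * (𝔟 + 𝔟₁))) ^ ((1:ℝ)/2)) := by
          gcongr
          · exact hA t ht
          · exact hB t ht
      _ = K ^ 2 := hK2
  -- a.e. bound
  have hae : ∀ᵐ x ∂μΩ, ((‖f x‖₊ : ENNReal)) ≤ K := by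
    have hnull : μΩ {x : ℝ × ℝ | x.1 ∉ Ioc (0:ℝ) 1} = 0 := by
      have hset : {x : ℝ × ℝ | x.1 ∉ Ioc (0:ℝ) 1} = (Ioc (0:ℝ) 1)ᶜ ×ˢ (univ : Set ℝ) := by
        ext x; simp [Set.mem_prod]
      rw [hμ, hset, Measure.prod_prod, Measure.restrict_apply measurableSet_Ioc.compl,
        compl_inter_self, measure_empty, zero_mul]
    have h1 : ∀ᵐ x ∂μΩ, x.1 ∈ Ioc (0:ℝ) 1 := by
      rw [ae_iff]; exact hnull
    filter_upwards [h1] with x hx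
    exact hpt x.1 hx x.2
  have hbound : eLpNorm f ⊤ μΩ ≤ K := by
    rw [eLpNorm_exponent_top]
    exact essSup_le_of_ae_le K hae
  -- convert K to the ofReal form
  have hofr : ∀ (x : ENNReal), x ≠ ⊤ →
      ENNReal.ofReal (x.toReal ^ ((1:ℝ)/4)) = x ^ ((1:ℝ)/4) := by
    intro x hx
    rw [ENNReal.toReal_rpow, ENNReal.ofReal_toReal
      (ENNReal.rpow_ne_top_of_nonneg (by norm_num) hx)]
  have hKle : K = ENNReal.ofReal
      (2 * 𝔞.toReal ^ ((1:ℝ)/4) * (𝔞.toReal + 𝔞₁.toReal) ^ ((1:ℝ)/4) *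
        𝔟.toReal ^ ((1:ℝ)/4) * (𝔟.toReal + 𝔟₁.toReal) ^ ((1:ℝ)/4)) := by
    rw [show 𝔞.toReal + 𝔞₁.toReal = (𝔞 + 𝔞₁).toReal from (ENNReal.toReal_add ha_ne ha1_ne).symm,
      show 𝔟.toReal + 𝔟₁.toReal = (𝔟 + 𝔟₁).toReal from (ENNReal.toReal_add hb_ne hb1_ne).symm]
    rw [ENNReal.ofReal_mul (by positivity), ENNReal.ofReal_mul (by positivity),
      ENNReal.ofReal_mul (by positivity), ENNReal.ofReal_mul (by positivity)]
    rw [hofr _ ha_ne, hofr _ (ENNReal.add_ne_top.2 ⟨ha_ne, ha1_ne⟩),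
      hofr _ hb_ne, hofr _ (ENNReal.add_ne_top.2 ⟨hb_ne, hb1_ne⟩)]
    rw [ENNReal.ofReal_ofNat, hK]
  exact hbound.trans_eq hKle
end

section
/- Let Ω = 𝕋 × ℝ. There is a constant C such that for any f ∈ H²(Ω), the oscillation part f̃ satisfies ‖f̃‖_{L^∞(Ω)} ≤ C ‖f̃‖_{L²}^{1/4} ‖∂₁f̃‖_{L²}^{1/4} ‖∂₂f̃‖_{L²}^{1/4} ‖∂₁∂₂f̃‖_{L²}^{1/4}. -/
open MeasureTheory Set

section Helpers

open intervalIntegral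

lemma my_abs_le : ∀ a b : ℝ, ‖a * b‖ ≤ (a ^ 2 + b ^ 2) / 2 := by
  intro a b
  rw [Real.norm_eq_abs, abs_mul]
  nlinarith [sq_nonneg (|a| - |b|), abs_nonneg a, abs_nonneg b, sq_abs a, sq_abs b]

/-- Integrable product of two square-integrable functions. -/
lemma my_integrable_mul {α : Type*} [MeasurableSpace α] {μ : Measure α} {u v : α → ℝ}
    (hu : AEStronglyMeasurable u μ) (hv : AEStronglyMeasurable v μ)
    (hu2 : Integrable (fun a => u a ^ 2) μ) (hv2 : Integrable (fun a => v a ^ 2) μ) :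
    Integrable (fun a => u a * v a) μ := by
  refine Integrable.mono' ((hu2.add hv2).div_const 2) (hu.mul hv) ?_
  filter_upwards with a using my_abs_le _ _

/-- Cauchy–Schwarz. -/
lemma my_CS {α : Type*} [MeasurableSpace α] {μ : Measure α} {u v : α → ℝ}
    (hu : AEStronglyMeasurable u μ) (hv : AEStronglyMeasurable v μ)
    (hu2 : Integrable (fun a => u a ^ 2) μ) (hv2 : Integrable (fun a => v a ^ 2) μ) :
    ∫ a, |u a * v a| ∂μ ≤ Real.sqrt (∫ a, u a ^ 2 ∂μ) * Real.sqrt (∫ a, v a ^ 2 ∂μ) := by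
  have hpq : Real.HolderConjugate 2 2 := Real.HolderConjugate.two_two
  have h2 : ENNReal.ofReal (2:ℝ) = 2 := by
    rw [ENNReal.ofReal_ofNat]
  have hmu : MemLp (fun a => |u a|) (ENNReal.ofReal (2:ℝ)) μ := by
    rw [h2, memLp_two_iff_integrable_sq (by simpa [Real.norm_eq_abs] using hu.norm)]
    simpa [sq_abs] using hu2
  have hmv : MemLp (fun a => |v a|) (ENNReal.ofReal (2:ℝ)) μ := by
    rw [h2, memLp_two_iff_integrable_sq (by simpa [Real.norm_eq_abs] using hv.norm)]
    simpa [sq_abs] using hv2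
  have := integral_mul_le_Lp_mul_Lq_of_nonneg hpq
    (Filter.Eventually.of_forall fun a => abs_nonneg (u a))
    (Filter.Eventually.of_forall fun a => abs_nonneg (v a)) hmu hmv
  have e1 : ∀ a, |u a| * |v a| = |u a * v a| := fun a => (abs_mul _ _).symm
  have e2 : ∀ w : α → ℝ, (fun a => |w a| ^ (2:ℝ)) = fun a => w a ^ 2 := by
    intro w; funext a
    rw [show (2:ℝ) = ((2:ℕ):ℝ) by norm_num, Real.rpow_natCast, sq_abs]
  calc ∫ a, |u a * v a| ∂μ = ∫ a, |u a| * |v a| ∂μ := by simp_rw [e1]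
    _ ≤ (∫ a, |u a| ^ (2:ℝ) ∂μ) ^ (1/2 : ℝ) * (∫ a, |v a| ^ (2:ℝ) ∂μ) ^ (1/2 : ℝ) := this
    _ = Real.sqrt (∫ a, u a ^ 2 ∂μ) * Real.sqrt (∫ a, v a ^ 2 ∂μ) := by
        rw [e2 u, e2 v, Real.sqrt_eq_rpow, Real.sqrt_eq_rpow]

/-- Agmon-type bound on the line. -/
lemma my_line_bound {h h' : ℝ → ℝ} (hd : ∀ s, HasDerivAt h (h' s) s)
    (hsq : Integrable (fun s => h s ^ 2) volume)
    (hmul : Integrable (fun s => h s * h' s) volume) :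
    ∀ x, h x ^ 2 ≤ 2 * ∫ s, |h s * h' s| := by
  intro x
  have habs : Integrable (fun s => |h s * h' s|) volume := hmul.abs
  refine le_of_forall_pos_le_add fun ε hε => ?_
  obtain ⟨y, hy⟩ : ∃ y, h y ^ 2 < ε := by
    by_contra hc
    push_neg at hc
    have : Integrable (fun _ : ℝ => ε) volume := by
      refine Integrable.mono' hsq aestronglyMeasurable_const ?_
      filter_upwards with s
      rw [Real.norm_eq_abs, abs_of_pos hε]; exact hc s
    have := (integrable_const_iff.mp this).resolve_left (by positivity)
    haveI := this; have h' := measure_lt_top (volume : Measure ℝ) univ; simp [Real.volume_univ] at h'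
  have hderiv : ∀ t ∈ uIcc y x, HasDerivAt (fun s => h s ^ 2) (2 * (h t * h' t)) t := by
    intro t _
    have : HasDerivAt (fun s => h s ^ 2) _ t := (hd t).pow 2
    simpa [mul_comm, mul_assoc, mul_left_comm] using this
  have hint : IntervalIntegrable (fun s => 2 * (h s * h' s)) volume y x :=
    (hmul.const_mul 2).intervalIntegrable
  have hftc := integral_eq_sub_of_hasDerivAt hderiv hint
  rw [intervalIntegral.integral_const_mul] at hftc
  have h1 : |∫ t in y..x, h t * h' t| ≤ ∫ t in Set.uIoc y x, |h t * h' t| ∂volume := by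
    simpa only [Real.norm_eq_abs] using
      (intervalIntegral.norm_integral_le_integral_norm_uIoc
        (f := fun t => h t * h' t) (a := y) (b := x) (μ := volume))
  have h2 : ∫ t in Set.uIoc y x, |h t * h' t| ∂volume ≤ ∫ s, |h s * h' s| := by
    refine setIntegral_le_integral habs ?_
    filter_upwards with s using abs_nonneg _
  have h4 : h x ^ 2 - h y ^ 2 ≤ 2 * ∫ s, |h s * h' s| := by
    rw [← hftc]
    have := (le_abs_self (∫ t in y..x, h t * h' t)).trans (h1.trans h2)
    linarith
  linarith

lemma my_exists_zero {h : ℝ → ℝ} (hc : Continuous h) (hz : ∫ t in (0:ℝ)..1, h t = 0) :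
    ∃ t₀ ∈ Icc (0:ℝ) 1, h t₀ = 0 := by
  have hcpt : IsCompact (Icc (0:ℝ) 1) := isCompact_Icc
  have hne : (Icc (0:ℝ) 1).Nonempty := ⟨0, by norm_num⟩
  obtain ⟨c, hcmem, hcmin⟩ := hcpt.exists_isMinOn hne hc.continuousOn
  obtain ⟨d, hdmem, hdmax⟩ := hcpt.exists_isMaxOn hne hc.continuousOn
  by_cases h1 : 0 < h c
  · exfalso
    have : (0:ℝ) < ∫ t in (0:ℝ)..1, h t := by
      have hle : ∫ t in (0:ℝ)..1, (fun _ => h c) t ≤ ∫ t in (0:ℝ)..1, h t := by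
        refine integral_mono_on (by norm_num) (intervalIntegrable_const) (hc.intervalIntegrable _ _) ?_
        intro t ht; exact hcmin ht
      simpa using lt_of_lt_of_le (by simpa using h1) hle
    linarith [hz ▸ this]
  by_cases h2 : h d < 0
  · exfalso
    have : (∫ t in (0:ℝ)..1, h t) < 0 := by
      have hle : ∫ t in (0:ℝ)..1, h t ≤ ∫ t in (0:ℝ)..1, (fun _ => h d) t := by
        refine integral_mono_on (by norm_num) (hc.intervalIntegrable _ _) (intervalIntegrable_const) ?_
        intro t ht; exact hdmax ht
      simpa using lt_of_le_of_lt hle (by simpa using h2)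
    linarith [hz ▸ this]
  push_neg at h1 h2
  have h0mem : (0:ℝ) ∈ uIcc (h c) (h d) := by
    rw [uIcc_of_le (h1.trans h2)]; exact ⟨h1, h2⟩
  have := intermediate_value_uIcc (hc.continuousOn (s := uIcc c d)) h0mem
  obtain ⟨t₀, ht₀, hval⟩ := this
  exact ⟨t₀, uIcc_subset_Icc hcmem hdmem ht₀, hval⟩

/-- Agmon-type bound on the circle for mean-zero functions. -/
lemma my_periodic_bound {h h' : ℝ → ℝ} (hp : Function.Periodic h 1)
    (hp' : Function.Periodic h' 1) (hd : ∀ t, HasDerivAt h (h' t) t)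
    (hmul : IntegrableOn (fun t => h t * h' t) (Ioc (0:ℝ) 1) volume)
    (hz : ∫ t in (0:ℝ)..1, h t = 0) :
    ∀ x, h x ^ 2 ≤ 4 * ∫ t in Ioc (0:ℝ) 1, |h t * h' t| := by
  intro x
  have hc : Continuous h := by
    refine continuous_iff_continuousAt.mpr fun t => (hd t).continuousAt
  obtain ⟨t₀, ht₀, hzero⟩ := my_exists_zero hc hz
  set n : ℤ := ⌊x - t₀⌋ with hn
  set x' : ℝ := x - n with hx'
  have hx'mem : t₀ ≤ x' ∧ x' < t₀ + 1 := by
    constructor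
    · have := Int.floor_le (x - t₀); simp only [hx', hn]; linarith
    · have := Int.lt_floor_add_one (x - t₀); simp only [hx', hn]; linarith
  have hhx' : h x' = h x := by
    have := hp.sub_int_mul_eq (x := x) n (c := 1)
    simpa [hx'] using this
  have hint01 : IntervalIntegrable (fun t => h t * h' t) volume 0 1 :=
    (intervalIntegrable_iff_integrableOn_Ioc_of_le (by norm_num)).mpr hmul
  have hint12 : IntervalIntegrable (fun t => h t * h' t) volume 1 2 := by
    have := hint01.comp_sub_right 1
    have heq : (fun t => h (t - 1) * h' (t - 1)) = fun t => h t * h' t := by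
      funext t
      have e1 : h (t - 1) = h t := by
        have := hp (t - 1); simpa using this.symm
      have e2 : h' (t - 1) = h' t := by
        have := hp' (t - 1); simpa using this.symm
      rw [e1, e2]
    rw [heq] at this
    simpa [one_add_one_eq_two] using this
  have hint02 : IntervalIntegrable (fun t => h t * h' t) volume 0 2 := hint01.trans hint12
  have hderiv : ∀ t ∈ uIcc t₀ x', HasDerivAt (fun s => h s ^ 2) (2 * (h t * h' t)) t := by
    intro t _
    have : HasDerivAt (fun s => h s ^ 2) _ t := (hd t).pow 2
    simpa [mul_comm, mul_assoc, mul_left_comm] using this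
  have hsub : uIcc t₀ x' ⊆ uIcc (0:ℝ) 2 := by
    rw [uIcc_of_le hx'mem.1, uIcc_of_le (by norm_num : (0:ℝ) ≤ 2)]
    intro t ht
    exact ⟨ht₀.1.trans ht.1, ht.2.trans (by linarith [ht₀.2, hx'mem.2])⟩
  have hint' : IntervalIntegrable (fun t => h t * h' t) volume t₀ x' :=
    hint02.mono_set hsub
  have hftc := integral_eq_sub_of_hasDerivAt hderiv ((hint'.const_mul 2))
  rw [intervalIntegral.integral_const_mul, hhx', hzero] at hftc
  have habs01 : IntervalIntegrable (fun t => |h t * h' t|) volume 0 1 := hint01.abs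
  have habs12 : IntervalIntegrable (fun t => |h t * h' t|) volume 1 2 := hint12.abs
  have h1 : |∫ t in t₀..x', h t * h' t| ≤ ∫ t in t₀..x', |h t * h' t| :=
    intervalIntegral.abs_integral_le_integral_abs hx'mem.1
  have h2 : ∫ t in t₀..x', |h t * h' t| ≤ ∫ t in (0:ℝ)..2, |h t * h' t| := by
    refine intervalIntegral.integral_mono_interval ht₀.1 hx'mem.1
      (by linarith [ht₀.2, hx'mem.2]) ?_ (habs01.trans habs12)
    filter_upwards with t using abs_nonneg _
  have h3 : ∫ t in (0:ℝ)..2, |h t * h' t| = 2 * ∫ t in (0:ℝ)..1, |h t * h' t| := by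
    have hsplit : ∫ t in (0:ℝ)..2, |h t * h' t| =
        (∫ t in (0:ℝ)..1, |h t * h' t|) + ∫ t in (1:ℝ)..2, |h t * h' t| :=
      (intervalIntegral.integral_add_adjacent_intervals habs01 habs12).symm
    have hper : Function.Periodic (fun t => |h t * h' t|) 1 := by
      intro t; simp [hp t, hp' t]
    have : ∫ t in (1:ℝ)..2, |h t * h' t| = ∫ t in (0:ℝ)..1, |h t * h' t| := by
      have := hper.intervalIntegral_add_eq 1 0
      simpa [one_add_one_eq_two] using this
    rw [hsplit, this]; ring
  have h4 : ∫ t in (0:ℝ)..1, |h t * h' t| = ∫ t in Ioc (0:ℝ) 1, |h t * h' t| := by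
    rw [intervalIntegral.integral_of_le (by norm_num)]
  have := (le_abs_self (∫ t in t₀..x', h t * h' t)).trans (h1.trans h2)
  have hx2 : h x ^ 2 ≤ 2 * ∫ t in (0:ℝ)..2, |h t * h' t| := by
    nlinarith [hftc]
  rw [h3, h4] at hx2
  linarith

lemma my_ae_meanzero {g t2 : ℝ × ℝ → ℝ}
    (hd2 : ∀ x : ℝ × ℝ, HasDerivAt (fun s => g (x.1, s)) (t2 x) x.2)
    (hL2 : MemLp t2 2 ((volume.restrict (Ioc (0:ℝ) 1)).prod volume))
    (hgint : ∀ y, IntegrableOn (fun t => g (t, y)) (Ioc (0:ℝ) 1) volume)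
    (hgz : ∀ y, ∫ t in Ioc (0:ℝ) 1, g (t, y) = 0) :
    ∀ᵐ σ : ℝ, ∫ t in Ioc (0:ℝ) 1, t2 (t, σ) = 0 := by
  set νt : Measure ℝ := volume.restrict (Ioc (0:ℝ) 1) with hνt
  set M2 : ℝ → ℝ := fun σ => ∫ t in Ioc (0:ℝ) 1, t2 (t, σ) with hM2
  have hmeq : ∀ a b : ℝ, νt.prod (volume.restrict (Icc a b))
      = (νt.prod volume).restrict (univ ×ˢ Icc a b) := by
    intro a b
    rw [← Measure.prod_restrict, Measure.restrict_univ]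
  have hfin : ∀ a b : ℝ, IsFiniteMeasure (νt.prod (volume.restrict (Icc a b))) := by
    intro a b
    constructor
    rw [← univ_prod_univ, Measure.prod_prod, hνt, Measure.restrict_apply_univ,
      Measure.restrict_apply_univ]
    exact ENNReal.mul_lt_top (by simp [Real.volume_Ioc]) (by simp [Real.volume_Icc])
  have hInt : ∀ a b : ℝ, Integrable t2 (νt.prod (volume.restrict (Icc a b))) := by
    intro a b
    haveI := hfin a b
    refine MemLp.integrable one_le_two ?_
    rw [hmeq a b]
    exact hL2.restrict _
  have hswap : ∀ a b : ℝ, Integrable (fun z : ℝ × ℝ => t2 (z.2, z.1))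
      ((volume.restrict (Icc a b)).prod νt) := fun a b => (hInt a b).swap
  have key : ∀ a b : ℝ, a ≤ b → ∫ σ in Icc a b, M2 σ = 0 := by
    intro a b hab
    have hsw := integral_integral_swap (f := fun σ t => t2 (t, σ))
      (μ := volume.restrict (Icc a b)) (ν := νt) (hswap a b)
    have hinner : ∀ᵐ t ∂νt, ∫ σ in Icc a b, t2 (t, σ) = g (t, b) - g (t, a) := by
      filter_upwards [(hInt a b).prod_right_ae] with t ht
      have hII : IntervalIntegrable (fun σ => t2 (t, σ)) volume a b := by
        rw [intervalIntegrable_iff_integrableOn_Ioc_of_le hab]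
        exact IntegrableOn.mono_set ht Ioc_subset_Icc_self
      have hftc := integral_eq_sub_of_hasDerivAt (f := fun s => g (t, s))
        (fun σ _ => hd2 (t, σ)) hII
      rw [integral_Icc_eq_integral_Ioc, ← intervalIntegral.integral_of_le hab, hftc]
    calc ∫ σ in Icc a b, M2 σ = ∫ t, (g (t, b) - g (t, a)) ∂νt := by
          rw [hsw]
          exact integral_congr_ae hinner
      _ = (∫ t in Ioc (0:ℝ) 1, g (t, b)) - ∫ t in Ioc (0:ℝ) 1, g (t, a) :=
          integral_sub (hgint b) (hgint a)
      _ = 0 := by rw [hgz a, hgz b]; ring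
  have haesm : AEStronglyMeasurable M2 volume := by
    have h1 : AEStronglyMeasurable (fun z : ℝ × ℝ => t2 (z.2, z.1)) (volume.prod νt) := by
      exact (hL2.aestronglyMeasurable).prod_swap
    exact h1.integral_prod_right'
  have hloc : LocallyIntegrable M2 volume := by
    rw [locallyIntegrable_iff]
    intro k hk
    obtain ⟨r, hr⟩ := hk.isBounded.subset_closedBall 0
    refine IntegrableOn.mono_set ?_ (hr.trans_eq Real.closedBall_eq_Icc)
    exact (hswap (0 - r) (0 + r)).integral_prod_left
  have := IsUnifLocDoublingMeasure.ae_tendsto_average (volume : Measure ℝ) hloc 1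
  filter_upwards [this] with σ hσ
  have hδ : Filter.Tendsto (fun n : ℕ => (1:ℝ)/(n+1)) Filter.atTop (nhdsWithin 0 (Ioi 0)) := by
    refine tendsto_nhdsWithin_iff.mpr ⟨tendsto_one_div_add_atTop_nhds_zero_nat, ?_⟩
    filter_upwards with n
    exact mem_Ioi.mpr (by positivity)
  have hmem : ∀ᶠ n : ℕ in Filter.atTop, σ ∈ Metric.closedBall σ (1 * ((1:ℝ)/(n+1))) := by
    filter_upwards with n
    refine Metric.mem_closedBall_self (by positivity)
  have htend := hσ (fun _ => σ) (fun n : ℕ => (1:ℝ)/(n+1)) hδ hmem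
  have hzero : ∀ n : ℕ, ⨍ y in Metric.closedBall σ ((1:ℝ)/(n+1)), M2 y = 0 := by
    intro n
    rw [setAverage_eq, Real.closedBall_eq_Icc, key _ _ (by
      have : (0:ℝ) ≤ 1/(n+1) := by positivity
      linarith)]
    simp
  have hconst : Filter.Tendsto (fun n : ℕ => ⨍ y in Metric.closedBall σ ((1:ℝ)/(n+1)), M2 y)
      Filter.atTop (nhds 0) := by
    simp_rw [hzero]; exact tendsto_const_nhds
  exact (tendsto_nhds_unique htend hconst).symm ▸ rfl

lemma my_eLp_sq {α : Type*} [MeasurableSpace α] {μ : Measure α} {u : α → ℝ}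
    (h : MemLp u 2 μ) :
    ((eLpNorm u 2 μ).toReal) ^ 2 = ∫ a, u a ^ 2 ∂μ := by
  rw [h.eLpNorm_eq_integral_rpow_norm two_ne_zero ENNReal.ofNat_ne_top]
  have he : ∀ a, ‖u a‖ ^ (ENNReal.toReal 2) = u a ^ 2 := by
    intro a
    rw [ENNReal.toReal_ofNat, show ((2:ℝ)) = ((2:ℕ):ℝ) by norm_num, Real.rpow_natCast,
      Real.norm_eq_abs, sq_abs]
  simp_rw [he]
  have hnn : (0:ℝ) ≤ ∫ a, u a ^ 2 ∂μ := integral_nonneg fun a => sq_nonneg _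
  rw [ENNReal.toReal_ofReal (by positivity)]
  rw [ENNReal.toReal_ofNat, ← Real.rpow_natCast (_ ^ _) 2, ← Real.rpow_mul hnn]
  norm_num

lemma my_final_numeric {y a b c d : ℝ} (ha : 0 ≤ a) (hb : 0 ≤ b) (hc : 0 ≤ c) (hd : 0 ≤ d)
    (h : y ^ 2 ≤ 8 * Real.sqrt (a * b * c * d)) :
    |y| ≤ 3 * a ^ ((1:ℝ)/4) * b ^ ((1:ℝ)/4) * c ^ ((1:ℝ)/4) * d ^ ((1:ℝ)/4) := by
  have habcd : 0 ≤ a * b * c * d := by positivity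
  have h1 : |y| = Real.sqrt (y ^ 2) := (Real.sqrt_sq_eq_abs y).symm
  have h2 : Real.sqrt (y ^ 2) ≤ Real.sqrt (8 * Real.sqrt (a * b * c * d)) :=
    Real.sqrt_le_sqrt h
  have h3 : Real.sqrt (8 * Real.sqrt (a * b * c * d))
      = Real.sqrt 8 * Real.sqrt (Real.sqrt (a * b * c * d)) :=
    Real.sqrt_mul (by norm_num) _
  have h4 : Real.sqrt (Real.sqrt (a * b * c * d)) = (a * b * c * d) ^ ((1:ℝ)/4) := by
    rw [Real.sqrt_eq_rpow, Real.sqrt_eq_rpow, ← Real.rpow_mul habcd]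
    norm_num
  have h5 : (a * b * c * d) ^ ((1:ℝ)/4)
      = a ^ ((1:ℝ)/4) * b ^ ((1:ℝ)/4) * c ^ ((1:ℝ)/4) * d ^ ((1:ℝ)/4) := by
    rw [Real.mul_rpow (by positivity) hd, Real.mul_rpow (by positivity) hc,
      Real.mul_rpow ha hb]
  have h6 : Real.sqrt 8 ≤ 3 := by
    have : (8:ℝ) ≤ 3 ^ 2 := by norm_num
    calc Real.sqrt 8 ≤ Real.sqrt (3 ^ 2) := Real.sqrt_le_sqrt this
      _ = 3 := by rw [Real.sqrt_sq]; norm_num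
  have hrn : (0:ℝ) ≤ (a*b*c*d) ^ ((1:ℝ)/4) := Real.rpow_nonneg habcd _
  calc |y| = Real.sqrt (y ^ 2) := h1
    _ ≤ Real.sqrt (8 * Real.sqrt (a * b * c * d)) := h2
    _ = Real.sqrt 8 * (a*b*c*d) ^ ((1:ℝ)/4) := by rw [h3, h4]
    _ ≤ 3 * (a*b*c*d) ^ ((1:ℝ)/4) := mul_le_mul_of_nonneg_right h6 hrn
    _ = 3 * a ^ ((1:ℝ)/4) * b ^ ((1:ℝ)/4) * c ^ ((1:ℝ)/4) * d ^ ((1:ℝ)/4) := by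
        rw [h5]; ring

end Helpers

/-- Anisotropic L^∞ bound for the oscillation part:
‖f̃‖_{L^∞(Ω)} ≤ C ‖f̃‖^{1/4} ‖∂₁f̃‖^{1/4} ‖∂₂f̃‖^{1/4} ‖∂₁∂₂f̃‖^{1/4}. -/
theorem osc_linfty_anisotropic :
    ∃ C : ℝ, 0 < C ∧ ∀ (f t1 t2 t12 : ℝ × ℝ → ℝ),
      (∀ x : ℝ × ℝ, f (x.1 + 1, x.2) = f x) →
      (∀ y : ℝ, IntegrableOn (fun t => f (t, y)) (Ioc (0:ℝ) 1)) →
      (∀ x : ℝ × ℝ, HasDerivAt (fun t => osc f (t, x.2)) (t1 x) x.1) →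
      (∀ x : ℝ × ℝ, HasDerivAt (fun s => osc f (x.1, s)) (t2 x) x.2) →
      (∀ x : ℝ × ℝ, HasDerivAt (fun t => t2 (t, x.2)) (t12 x) x.1) →
      MemLp (osc f) 2 μΩ → MemLp t1 2 μΩ → MemLp t2 2 μΩ → MemLp t12 2 μΩ →
      eLpNorm (osc f) ⊤ μΩ ≤ ENNReal.ofReal
        (C * (eLpNorm (osc f) 2 μΩ).toReal ^ ((1:ℝ)/4) *
          (eLpNorm t1 2 μΩ).toReal ^ ((1:ℝ)/4) *
          (eLpNorm t2 2 μΩ).toReal ^ ((1:ℝ)/4) *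
          (eLpNorm t12 2 μΩ).toReal ^ ((1:ℝ)/4)) := by
  refine ⟨3, by norm_num, ?_⟩
  intro f t1 t2 t12 hper hint hd1 hd2 hd12 hL0 hL1 hL2 hL12
  rw [show μΩ = (volume.restrict (Ioc (0:ℝ) 1)).prod volume from rfl] at hL0 hL1 hL2 hL12 ⊢
  set g : ℝ × ℝ → ℝ := osc f with hgdef
  set n0 : ℝ := (eLpNorm g 2 ((volume.restrict (Ioc (0:ℝ) 1)).prod volume)).toReal with hn0
  set n1 : ℝ := (eLpNorm t1 2 ((volume.restrict (Ioc (0:ℝ) 1)).prod volume)).toReal with hn1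
  set n2 : ℝ := (eLpNorm t2 2 ((volume.restrict (Ioc (0:ℝ) 1)).prod volume)).toReal with hn2
  set n12 : ℝ := (eLpNorm t12 2 ((volume.restrict (Ioc (0:ℝ) 1)).prod volume)).toReal with hn12
  have hn0nn : 0 ≤ n0 := ENNReal.toReal_nonneg
  have hn1nn : 0 ≤ n1 := ENNReal.toReal_nonneg
  have hn2nn : 0 ≤ n2 := ENNReal.toReal_nonneg
  have hn12nn : 0 ≤ n12 := ENNReal.toReal_nonneg
  -- periodicity of g in the first variable
  have hgper : ∀ τ s, g (τ + 1, s) = g (τ, s) := by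
    intro τ s
    have h := hper (τ, s)
    simp only [hgdef, osc]
    simp only at h
    rw [h]
  have hgper' : ∀ s, Function.Periodic (fun τ => g (τ, s)) 1 := fun s τ => hgper τ s
  -- periodicity of the derivatives
  have ht1per : ∀ s, Function.Periodic (fun τ => t1 (τ, s)) 1 := by
    intro s τ
    have h1 := hd1 (τ + 1, s)
    have h2 : HasDerivAt (fun t => g (t + 1, s)) (t1 (τ + 1, s)) τ :=
      HasDerivAt.comp_add_const τ 1 h1
    have h3 : (fun t : ℝ => g (t + 1, s)) = fun t => g (t, s) := funext fun t => hgper t s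
    rw [h3] at h2
    exact h2.unique (hd1 (τ, s))
  have ht2per : ∀ s, Function.Periodic (fun τ => t2 (τ, s)) 1 := by
    intro s τ
    have h1 := hd2 (τ + 1, s)
    have h3 : (fun σ : ℝ => g (τ + 1, σ)) = fun σ => g (τ, σ) := funext fun σ => hgper τ σ
    rw [show (fun σ : ℝ => g ((τ + 1, s).1, σ)) = fun σ : ℝ => g (τ + 1, σ) from rfl, h3] at h1
    exact h1.unique (hd2 (τ, s))
  have ht12per : ∀ s, Function.Periodic (fun τ => t12 (τ, s)) 1 := by
    intro s τ
    have h1 := hd12 (τ + 1, s)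
    have h2 : HasDerivAt (fun t => t2 (t + 1, s)) (t12 (τ + 1, s)) τ :=
      HasDerivAt.comp_add_const τ 1 h1
    have h3 : (fun t : ℝ => t2 (t + 1, s)) = fun t => t2 (t, s) := funext fun t => ht2per s t
    rw [h3] at h2
    exact h2.unique (hd12 (τ, s))
  -- continuity of slices of g
  have hgcont2 : ∀ τ, Continuous fun s => g (τ, s) := fun τ =>
    continuous_iff_continuousAt.mpr fun s => (hd2 (τ, s)).continuousAt
  -- mean-zero of g slices
  have hIf : ∀ y, IntervalIntegrable (fun τ => f (τ, y)) volume 0 1 := fun y =>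
    (intervalIntegrable_iff_integrableOn_Ioc_of_le (by norm_num)).mpr (hint y)
  have hgz0 : ∀ y, ∫ τ in (0:ℝ)..1, g (τ, y) = 0 := by
    intro y
    have he : (fun τ => g (τ, y)) = fun τ => f (τ, y) - havg f y := rfl
    rw [he, intervalIntegral.integral_sub (hIf y) intervalIntegrable_const,
      intervalIntegral.integral_const]
    simp [havg]
  have hgzIoc : ∀ y, ∫ τ in Ioc (0:ℝ) 1, g (τ, y) = 0 := by
    intro y
    rw [← intervalIntegral.integral_of_le (by norm_num : (0:ℝ) ≤ 1)]
    exact hgz0 y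
  have hgint : ∀ y, IntegrableOn (fun τ => g (τ, y)) (Ioc (0:ℝ) 1) volume := by
    intro y
    have he : (fun τ => g (τ, y)) = fun τ => f (τ, y) - havg f y := rfl
    rw [he]
    exact (hint y).sub ((integrableOn_const_iff).mpr (Or.inr (by simp [Real.volume_Ioc])))
  -- measurability and integrability over the product measure
  have hsm0 := hL0.aestronglyMeasurable
  have hsm1 := hL1.aestronglyMeasurable
  have hsm2 := hL2.aestronglyMeasurable
  have hsm12 := hL12.aestronglyMeasurable
  have hg2 := hL0.integrable_sq
  have ht1sq := hL1.integrable_sq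
  have ht2sq := hL2.integrable_sq
  have ht12sq := hL12.integrable_sq
  have hmul01 : Integrable (fun x => g x * t1 x)
      ((volume.restrict (Ioc (0:ℝ) 1)).prod volume) := my_integrable_mul hsm0 hsm1 hg2 ht1sq
  have hmul02 : Integrable (fun x => g x * t2 x)
      ((volume.restrict (Ioc (0:ℝ) 1)).prod volume) := my_integrable_mul hsm0 hsm2 hg2 ht2sq
  have hmul212 : Integrable (fun x => t2 x * t12 x)
      ((volume.restrict (Ioc (0:ℝ) 1)).prod volume) := my_integrable_mul hsm2 hsm12 ht2sq ht12sq
  -- L² Cauchy-Schwarz on the product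
  have hI0 := my_eLp_sq hL0
  have hI1 := my_eLp_sq hL1
  have hI2 := my_eLp_sq hL2
  have hI12 := my_eLp_sq hL12
  have hP : ∫ x, |g x * t1 x| ∂((volume.restrict (Ioc (0:ℝ) 1)).prod volume) ≤ n0 * n1 := by
    have := my_CS hsm0 hsm1 hg2 ht1sq
    rwa [← hI0, ← hI1, Real.sqrt_sq hn0nn, Real.sqrt_sq hn1nn] at this
  have hQ : ∫ x, |t2 x * t12 x| ∂((volume.restrict (Ioc (0:ℝ) 1)).prod volume) ≤ n2 * n12 := by
    have := my_CS hsm2 hsm12 ht2sq ht12sq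
    rwa [← hI2, ← hI12, Real.sqrt_sq hn2nn, Real.sqrt_sq hn12nn] at this
  -- a.e. mean-zero of t2 slices
  have hmz2 : ∀ᵐ σ : ℝ, ∫ τ in Ioc (0:ℝ) 1, t2 (τ, σ) = 0 :=
    my_ae_meanzero hd2 hL2 hgint hgzIoc
  -- periodic-direction bounds, a.e. in σ
  have hae1 : ∀ᵐ σ : ℝ, ∀ τ, g (τ, σ) ^ 2
      ≤ 4 * ∫ t in Ioc (0:ℝ) 1, |g (t, σ) * t1 (t, σ)| := by
    filter_upwards [hmul01.prod_left_ae] with σ hσ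
    exact my_periodic_bound (hgper' σ) (ht1per σ) (fun τ => hd1 (τ, σ)) hσ (hgz0 σ)
  have hae2 : ∀ᵐ σ : ℝ, ∀ τ, t2 (τ, σ) ^ 2
      ≤ 4 * ∫ t in Ioc (0:ℝ) 1, |t2 (t, σ) * t12 (t, σ)| := by
    filter_upwards [hmul212.prod_left_ae, hmz2] with σ hσ hz
    refine my_periodic_bound (ht2per σ) (ht12per σ) (fun τ => hd12 (τ, σ)) hσ ?_
    rw [intervalIntegral.integral_of_le (by norm_num : (0:ℝ) ≤ 1)]
    exact hz
  -- integrability and value of the slice integrals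
  have hpint : Integrable (fun σ => ∫ τ in Ioc (0:ℝ) 1, |g (τ, σ) * t1 (τ, σ)|) volume :=
    (hmul01.abs.swap).integral_prod_left
  have hqint : Integrable (fun σ => ∫ τ in Ioc (0:ℝ) 1, |t2 (τ, σ) * t12 (τ, σ)|) volume :=
    (hmul212.abs.swap).integral_prod_left
  have hpval : ∫ σ, (∫ τ in Ioc (0:ℝ) 1, |g (τ, σ) * t1 (τ, σ)|)
      = ∫ x, |g x * t1 x| ∂((volume.restrict (Ioc (0:ℝ) 1)).prod volume) := by
    rw [integral_prod _ hmul01.abs,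
      integral_integral_swap (f := fun τ σ => |g (τ, σ) * t1 (τ, σ)|) hmul01.abs]
  have hqval : ∫ σ, (∫ τ in Ioc (0:ℝ) 1, |t2 (τ, σ) * t12 (τ, σ)|)
      = ∫ x, |t2 x * t12 x| ∂((volume.restrict (Ioc (0:ℝ) 1)).prod volume) := by
    rw [integral_prod _ hmul212.abs,
      integral_integral_swap (f := fun τ σ => |t2 (τ, σ) * t12 (τ, σ)|) hmul212.abs]
  -- main pointwise bound, a.e. in the first variable
  have hx1ae : ∀ᵐ τ ∂(volume.restrict (Ioc (0:ℝ) 1)),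
      ∀ s, g (τ, s) ^ 2 ≤ 8 * Real.sqrt (n0 * n1 * n2 * n12) := by
    filter_upwards [hg2.prod_right_ae, ht2sq.prod_right_ae, hmul02.prod_right_ae,
      hsm2.prodMk_left] with τ h1 h2 h3 h4
    intro s
    have hline := my_line_bound (h := fun σ => g (τ, σ)) (h' := fun σ => t2 (τ, σ))
      (fun σ => hd2 (τ, σ)) h1 h3 s
    have hCS := my_CS (μ := volume) (u := fun σ => g (τ, σ)) (v := fun σ => t2 (τ, σ))
      (hgcont2 τ).aestronglyMeasurable h4 h1 h2
    have hA : ∫ σ, g (τ, σ) ^ 2 ≤ 4 * (n0 * n1) := by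
      have hmono : ∫ σ, g (τ, σ) ^ 2
          ≤ ∫ σ, 4 * (∫ t in Ioc (0:ℝ) 1, |g (t, σ) * t1 (t, σ)|) := by
        refine integral_mono_ae h1 (hpint.const_mul 4) ?_
        filter_upwards [hae1] with σ hσ using hσ τ
      rw [integral_const_mul, hpval] at hmono
      nlinarith [hP]
    have hB : ∫ σ, t2 (τ, σ) ^ 2 ≤ 4 * (n2 * n12) := by
      have hmono : ∫ σ, t2 (τ, σ) ^ 2
          ≤ ∫ σ, 4 * (∫ t in Ioc (0:ℝ) 1, |t2 (t, σ) * t12 (t, σ)|) := by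
        refine integral_mono_ae h2 (hqint.const_mul 4) ?_
        filter_upwards [hae2] with σ hσ using hσ τ
      rw [integral_const_mul, hqval] at hmono
      nlinarith [hQ]
    have h5 : Real.sqrt (∫ σ, g (τ, σ) ^ 2) ≤ Real.sqrt (4 * (n0 * n1)) :=
      Real.sqrt_le_sqrt hA
    have h6 : Real.sqrt (∫ σ, t2 (τ, σ) ^ 2) ≤ Real.sqrt (4 * (n2 * n12)) :=
      Real.sqrt_le_sqrt hB
    have h7 : Real.sqrt (∫ σ, g (τ, σ) ^ 2) * Real.sqrt (∫ σ, t2 (τ, σ) ^ 2)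
        ≤ Real.sqrt (4 * (n0 * n1)) * Real.sqrt (4 * (n2 * n12)) :=
      mul_le_mul h5 h6 (Real.sqrt_nonneg _) (Real.sqrt_nonneg _)
    have h8 : Real.sqrt (4 * (n0 * n1)) * Real.sqrt (4 * (n2 * n12))
        = 4 * Real.sqrt (n0 * n1 * n2 * n12) := by
      have e4 : Real.sqrt 4 = 2 := by
        rw [show (4:ℝ) = 2 ^ 2 by norm_num, Real.sqrt_sq (by norm_num : (0:ℝ) ≤ 2)]
      rw [Real.sqrt_mul (by norm_num : (0:ℝ) ≤ 4) (n0 * n1),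
        Real.sqrt_mul (by norm_num : (0:ℝ) ≤ 4) (n2 * n12), e4,
        show n0 * n1 * n2 * n12 = (n0 * n1) * (n2 * n12) by ring,
        Real.sqrt_mul (mul_nonneg hn0nn hn1nn)]
      ring
    calc g (τ, s) ^ 2 ≤ 2 * ∫ σ, |g (τ, σ) * t2 (τ, σ)| := hline
      _ ≤ 2 * (Real.sqrt (∫ σ, g (τ, σ) ^ 2) * Real.sqrt (∫ σ, t2 (τ, σ) ^ 2)) := by
          linarith [hCS]
      _ ≤ 2 * (4 * Real.sqrt (n0 * n1 * n2 * n12)) := by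
          rw [← h8]; linarith [h7]
      _ = 8 * Real.sqrt (n0 * n1 * n2 * n12) := by ring
  -- transfer to the product measure
  have hprodae : ∀ᵐ x ∂((volume.restrict (Ioc (0:ℝ) 1)).prod volume),
      g x ^ 2 ≤ 8 * Real.sqrt (n0 * n1 * n2 * n12) := by
    obtain ⟨T, hTsub, hTm, hT0⟩ := exists_measurable_superset_of_null (ae_iff.mp hx1ae)
    rw [ae_iff]
    refine measure_mono_null (t := T ×ˢ (univ : Set ℝ)) (fun x hx => ?_) ?_
    · have hx1 : x.1 ∈ T := hTsub fun hall => hx (by simpa using hall x.2)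
      exact (mem_prod).mpr ⟨hx1, mem_univ x.2⟩
    · rw [Measure.prod_prod, hT0, zero_mul]
  -- conclude
  have habs : ∀ᵐ x ∂((volume.restrict (Ioc (0:ℝ) 1)).prod volume),
      ‖g x‖ ≤ 3 * n0 ^ ((1:ℝ)/4) * n1 ^ ((1:ℝ)/4) * n2 ^ ((1:ℝ)/4) * n12 ^ ((1:ℝ)/4) := by
    filter_upwards [hprodae] with x hx
    rw [Real.norm_eq_abs]
    exact my_final_numeric hn0nn hn1nn hn2nn hn12nn hx
  calc eLpNorm g ⊤ ((volume.restrict (Ioc (0:ℝ) 1)).prod volume)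
      = eLpNormEssSup g ((volume.restrict (Ioc (0:ℝ) 1)).prod volume) := eLpNorm_exponent_top
    _ ≤ ENNReal.ofReal (3 * n0 ^ ((1:ℝ)/4) * n1 ^ ((1:ℝ)/4) * n2 ^ ((1:ℝ)/4) * n12 ^ ((1:ℝ)/4)) :=
        eLpNormEssSup_le_of_ae_bound habs
end

section
/- Let Ω = 𝕋 × ℝ. There is a constant C such that for any f, g, h ∈ L²(Ω) with ∂₁f̃ ∈ L²(Ω) and ∂₂g ∈ L²(Ω), |∫_Ω f̃ g h dx| ≤ C ‖∂₁f̃‖_{L²} ‖g‖_{L²}^{1/2} ‖∂₂g‖_{L²}^{1/2} ‖h‖_{L²}, where f̃ is the oscillation part of f. -/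
open MeasureTheory Set
open scoped ENNReal NNReal

/-- The measure on Ω = 𝕋 × ℝ (with 𝕋 = [0,1] the 1D periodic box), modeled as
Lebesgue measure on the fundamental strip (0,1] × ℝ ⊆ ℝ². Functions on Ω are
modeled as functions on ℝ² that are 1-periodic in the first variable. -/
lemma ofReal_norm_eq_coe_nnnorm (x : ℝ) : ENNReal.ofReal ‖x‖ = (‖x‖₊ : ℝ≥0∞) :=
  ENNReal.ofReal_eq_coe_nnreal _

lemma enns (r : ℝ) : (‖r‖₊ : ℝ≥0∞) ^ (2:ℝ) = ENNReal.ofReal (r^2) := by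
  rw [← ofReal_norm_eq_coe_nnnorm,
    ENNReal.ofReal_rpow_of_nonneg (norm_nonneg r) (by norm_num : (0:ℝ) ≤ 2)]
  congr 1
  rw [show (2:ℝ) = ((2:ℕ):ℝ) by norm_num, Real.rpow_natCast, Real.norm_eq_abs, sq_abs]

lemma sqrt_sq' (a : ℝ≥0∞) : (a^(2:ℝ))^(1/2:ℝ) = a := by
  rw [← ENNReal.rpow_mul]; norm_num

lemma sq_sqrt' (a : ℝ≥0∞) : (a^(1/2:ℝ))^(2:ℝ) = a := by
  rw [← ENNReal.rpow_mul]; norm_num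

lemma conj22 : Real.HolderConjugate 2 2 := Real.holderConjugate_iff.mpr ⟨one_lt_two, by norm_num⟩

lemma exists_zero_of_integral_zero {φ : ℝ → ℝ} (hc : Continuous φ)
    (h0 : ∫ t in (0:ℝ)..1, φ t = 0) : ∃ t₀ ∈ Icc (0:ℝ) 1, φ t₀ = 0 := by
  obtain ⟨a, ha, hmin⟩ := isCompact_Icc.exists_isMinOn (nonempty_Icc.2 zero_le_one)
    hc.continuousOn
  obtain ⟨b, hb, hmax⟩ := isCompact_Icc.exists_isMaxOn (nonempty_Icc.2 zero_le_one)
    hc.continuousOn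
  have h1 : φ a ≤ 0 := by
    have h := intervalIntegral.integral_mono_on (f := fun _ => φ a) (g := φ) zero_le_one
      intervalIntegrable_const (hc.intervalIntegrable (μ := volume) 0 1) (fun x hx => hmin hx)
    simpa [h0] using h
  have h2 : 0 ≤ φ b := by
    have h := intervalIntegral.integral_mono_on (f := φ) (g := fun _ => φ b) zero_le_one
      (hc.intervalIntegrable (μ := volume) 0 1) intervalIntegrable_const (fun x hx => hmax hx)
    simpa [h0] using h
  have hmem : (0:ℝ) ∈ uIcc (φ a) (φ b) := by
    rw [Set.mem_uIcc]; left; exact ⟨h1, h2⟩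
  obtain ⟨t₀, ht₀, hval⟩ := intermediate_value_uIcc (hc.continuousOn (s := uIcc a b)) hmem
  refine ⟨t₀, ?_, hval⟩
  have : uIcc a b ⊆ Icc 0 1 := by
    rw [uIcc_eq_union]
    exact union_subset (Icc_subset_Icc ha.1 hb.2) (Icc_subset_Icc hb.1 ha.2)
  exact this ht₀

lemma agmon_sq {u u' : ℝ → ℝ} (hd : ∀ s, HasDerivAt u (u' s) s)
    (hL2 : ∫⁻ s, (‖u s‖₊ : ℝ≥0∞) ^ (2:ℝ) ∂volume ≠ ⊤)
    (hi : Integrable (fun s => u s * u' s) volume) (x : ℝ) :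
    u x ^ 2 ≤ 2 * ∫ s, |u s * u' s| ∂volume := by
  have hi2 : Integrable (fun s => u' s * u s + u s * u' s) volume := by
    have h : (fun s => u' s * u s + u s * u' s) = fun s => 2 * (u s * u' s) := by
      funext s; ring
    rw [h]; exact hi.const_mul 2
  refine le_of_forall_pos_le_add fun ε hε => ?_
  have hex : ∃ a, a < x ∧ u a ^ 2 < ε := by
    by_contra hcon
    push_neg at hcon
    have hmono : ∫⁻ s in Iio x, ENNReal.ofReal ε ∂volume
        ≤ ∫⁻ s in Iio x, (‖u s‖₊ : ℝ≥0∞) ^ (2:ℝ) ∂volume := by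
      refine lintegral_mono_ae ?_
      filter_upwards [ae_restrict_mem measurableSet_Iio] with s hs
      rw [enns]
      exact ENNReal.ofReal_le_ofReal (hcon s hs)
    have hconst : ∫⁻ s in Iio x, ENNReal.ofReal ε ∂volume = ⊤ := by
      rw [lintegral_const, Measure.restrict_apply MeasurableSet.univ, univ_inter,
        Real.volume_Iio, ENNReal.mul_top]
      exact (ENNReal.ofReal_pos.2 hε).ne'
    exact hL2 (top_le_iff.mp (hconst ▸ hmono.trans (setLIntegral_le_lintegral _ _)))
  obtain ⟨a, hax, haε⟩ := hex
  have hftc : ∫ t in a..x, (u' t * u t + u t * u' t) = u x * u x - u a * u a :=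
    intervalIntegral.integral_eq_sub_of_hasDerivAt (fun t _ => (hd t).mul (hd t))
      (hi2.intervalIntegrable)
  have h1 : u x ^ 2 = u a ^ 2 + ∫ t in a..x, (u' t * u t + u t * u' t) := by
    rw [hftc]; ring
  have h2 : ∫ t in a..x, (u' t * u t + u t * u' t)
      ≤ ∫ s, |u' s * u s + u s * u' s| ∂volume := by
    rw [intervalIntegral.integral_of_le hax.le]
    calc ∫ t in Ioc a x, (u' t * u t + u t * u' t) ∂volume
        ≤ ∫ t in Ioc a x, |u' t * u t + u t * u' t| ∂volume := by
          refine integral_mono hi2.integrableOn hi2.abs.integrableOn fun s => le_abs_self _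
      _ ≤ ∫ s, |u' s * u s + u s * u' s| ∂volume :=
          setIntegral_le_integral hi2.abs (Filter.Eventually.of_forall fun s => abs_nonneg _)
  have h3 : ∫ s, |u' s * u s + u s * u' s| ∂volume = 2 * ∫ s, |u s * u' s| ∂volume := by
    rw [← MeasureTheory.integral_const_mul]
    congr 1; funext s
    rw [show u' s * u s + u s * u' s = 2 * (u s * u' s) by ring, abs_mul, abs_two]
  calc u x ^ 2 = u a ^ 2 + ∫ t in a..x, (u' t * u t + u t * u' t) := h1
    _ ≤ ε + 2 * ∫ s, |u s * u' s| ∂volume := by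
        refine add_le_add haε.le (h2.trans_eq h3)
    _ = 2 * (∫ s, |u s * u' s| ∂volume) + ε := by ring

lemma eLp2 {α} [MeasurableSpace α] (μ : Measure α) (w : α → ℝ) :
    eLpNorm w 2 μ = (∫⁻ s, (‖w s‖₊ : ℝ≥0∞) ^ (2:ℝ) ∂μ) ^ (1/2:ℝ) := by
  rw [eLpNorm_eq_lintegral_rpow_enorm_toReal (by norm_num) (by norm_num)]
  norm_num
  rfl

lemma line_bound_sq {u u' : ℝ → ℝ} (hd : ∀ s, HasDerivAt u (u' s) s)
    (hA : ∫⁻ s, (‖u s‖₊ : ℝ≥0∞) ^ (2:ℝ) ∂volume ≠ ⊤) (y : ℝ) :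
    (‖u y‖₊ : ℝ≥0∞) ^ (2:ℝ) ≤
      2 * (∫⁻ s, (‖u s‖₊ : ℝ≥0∞) ^ (2:ℝ) ∂volume) ^ (1/2:ℝ)
        * (∫⁻ s, (‖u' s‖₊ : ℝ≥0∞) ^ (2:ℝ) ∂volume) ^ (1/2:ℝ) := by
  have hu_cont : Continuous u := by
    apply continuous_iff_continuousAt.2 fun s => (hd s).continuousAt
  have hu'_eq : u' = deriv u := funext fun s => ((hd s).deriv).symm
  have hu'_meas : Measurable u' := hu'_eq ▸ measurable_deriv u
  set A := ∫⁻ s, (‖u s‖₊ : ℝ≥0∞) ^ (2:ℝ) ∂volume with hA_def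
  set B := ∫⁻ s, (‖u' s‖₊ : ℝ≥0∞) ^ (2:ℝ) ∂volume with hB_def
  have hmeasA : AEMeasurable (fun s => (‖u s‖₊ : ℝ≥0∞) ^ (2:ℝ)) volume :=
    (hu_cont.measurable.nnnorm.coe_nnreal_ennreal.pow_const _).aemeasurable
  have hmeasB : AEMeasurable (fun s => (‖u' s‖₊ : ℝ≥0∞) ^ (2:ℝ)) volume :=
    (hu'_meas.nnnorm.coe_nnreal_ennreal.pow_const _).aemeasurable
  by_cases hA0 : A = 0
  · have hae : u =ᵐ[volume] (fun _ => 0) := by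
      have h := (lintegral_eq_zero_iff' hmeasA).1 hA0
      filter_upwards [h] with s hs
      rcases ENNReal.rpow_eq_zero_iff.mp hs with ⟨h,_⟩ | ⟨_,h⟩
      · simpa using h
      · norm_num at h
    have hzero : u = fun _ => 0 := (hu_cont.ae_eq_iff_eq volume continuous_const).1 hae
    simp [hzero]
  by_cases hB0 : B = 0
  · exfalso
    have hae : u' =ᵐ[volume] (fun _ => 0) := by
      have h := (lintegral_eq_zero_iff' hmeasB).1 hB0
      filter_upwards [h] with s hs
      rcases ENNReal.rpow_eq_zero_iff.mp hs with ⟨h,_⟩ | ⟨_,h⟩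
      · simpa using h
      · norm_num at h
    -- u is constant
    have hconst : ∀ b, u b = u 0 := by
      intro b
      have hii : ∀ c d : ℝ, IntervalIntegrable u' volume c d := by
        intro c d
        have : Integrable u' volume := by
          rw [integrable_congr hae]; exact integrable_zero _ _ _
        exact this.intervalIntegrable
      have hftc : ∫ t in (0:ℝ)..b, u' t = u b - u 0 :=
        intervalIntegral.integral_eq_sub_of_hasDerivAt (fun t _ => hd t) (hii 0 b)
      have hz : ∫ t in (0:ℝ)..b, u' t = 0 := by
        rw [intervalIntegral.integral_congr_ae ?_, intervalIntegral.integral_zero]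
        filter_upwards [hae] with s hs _ using hs
      have := hftc.symm.trans hz
      linarith [sub_eq_zero.mp this]
    rcases eq_or_ne (u 0) 0 with h0 | h0
    · exact hA0 (by simp [hA_def, fun s => (hconst s).trans h0])
    · apply hA
      have : ∀ s:ℝ, (‖u s‖₊ : ℝ≥0∞) ^ (2:ℝ) = (‖u 0‖₊ : ℝ≥0∞) ^ (2:ℝ) := fun s => by
        rw [hconst s]
      rw [hA_def]
      simp only [this]
      rw [lintegral_const, Real.volume_univ, ENNReal.mul_top]
      simp [ENNReal.rpow_eq_zero_iff, h0]
  by_cases hBtop : B = ⊤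
  · rw [hBtop, ENNReal.top_rpow_of_pos (by norm_num)]
    rw [ENNReal.mul_top (by
      refine mul_ne_zero (by norm_num) ?_
      simp [ENNReal.rpow_eq_zero_iff, hA0, hA])]
    exact le_top
  have humem : MemLp u 2 volume := ⟨hu_cont.aestronglyMeasurable, by
    rw [eLp2]; exact ENNReal.rpow_lt_top_of_nonneg (by norm_num) hA⟩
  have hu'mem : MemLp u' 2 volume := ⟨hu'_meas.aestronglyMeasurable, by
    rw [eLp2]; exact ENNReal.rpow_lt_top_of_nonneg (by norm_num) hBtop⟩
  have hi : Integrable (fun s => u s * u' s) volume := by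
    have h12 : (1:ℝ≥0∞)/1 = 1/2 + 1/2 := by
      rw [div_one, one_div, ENNReal.inv_two_add_inv_two]
    have hsm := hu'mem.smul humem (r := 1)
    exact memLp_one_iff_integrable.mp hsm
  have key := agmon_sq hd hA hi y
  rw [enns (u y)]
  calc ENNReal.ofReal (u y ^ 2)
      ≤ ENNReal.ofReal (2 * ∫ s, |u s * u' s| ∂volume) := ENNReal.ofReal_le_ofReal key
    _ = 2 * ENNReal.ofReal (∫ s, |u s * u' s| ∂volume) := by
        rw [ENNReal.ofReal_mul (by norm_num)]; norm_num
    _ = 2 * ∫⁻ s, (‖u s * u' s‖₊ : ℝ≥0∞) ∂volume := by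
        rw [MeasureTheory.ofReal_integral_eq_lintegral_ofReal hi.abs
          (Filter.Eventually.of_forall fun s => abs_nonneg _)]
        congr 1
        refine lintegral_congr fun s => ?_
        rw [← ofReal_norm_eq_coe_nnnorm, Real.norm_eq_abs]
    _ ≤ 2 * (A ^ (1/2:ℝ) * B ^ (1/2:ℝ)) := by
        gcongr
        have hcs := ENNReal.lintegral_mul_le_Lp_mul_Lq volume conj22
          (hu_cont.measurable.nnnorm.coe_nnreal_ennreal.aemeasurable)
          (hu'_meas.nnnorm.coe_nnreal_ennreal.aemeasurable)
        simp only [Pi.mul_apply] at hcs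
        refine le_trans (le_of_eq ?_) hcs
        refine lintegral_congr fun s => ?_
        rw [← ENNReal.coe_mul, nnnorm_mul]
    _ = 2 * A ^ (1/2:ℝ) * B ^ (1/2:ℝ) := (mul_assoc _ _ _).symm

lemma periodic_line_bound {v v' : ℝ → ℝ} (hper : ∀ t, v (t + 1) = v t)
    (hd : ∀ t, HasDerivAt v (v' t) t) (h0 : ∫ t in (0:ℝ)..1, v t = 0)
    (hi : IntervalIntegrable v' volume 0 1) :
    ∀ x ∈ Ioc (0:ℝ) 1, |v x| ≤ ∫ t in (0:ℝ)..1, |v' t| := by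
  have hv'per : ∀ t, v' (t + 1) = v' t := by
    intro t
    have h1 : HasDerivAt (fun s => v (s + 1)) (v' (t + 1) * 1) t :=
      (hd (t + 1)).comp t ((hasDerivAt_id t).add_const 1)
    have h2 : (fun s => v (s + 1)) = v := funext hper
    rw [h2] at h1
    have := h1.unique (hd t)
    linarith
  have hc : Continuous v := continuous_iff_continuousAt.2 fun s => (hd s).continuousAt
  have hi2 : IntervalIntegrable v' volume 1 2 := by
    have h := hi.comp_add_right (-1)
    have he : (fun x => v' (x + -1)) = v' := by
      funext x
      rw [show x = (x + -1) + 1 by ring, hv'per]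
      ring_nf
    rw [he] at h
    norm_num at h
    exact h
  have hi02 : IntervalIntegrable v' volume 0 2 := hi.trans hi2
  have hii : ∀ c d, c ∈ Icc (0:ℝ) 2 → d ∈ Icc (0:ℝ) 2 → IntervalIntegrable v' volume c d := by
    intro c d hcm hdm
    refine hi02.mono_set ?_
    rw [Set.uIcc_subset_uIcc_iff_mem]
    constructor <;> [exact Set.mem_uIcc_of_le hcm.1 hcm.2; exact Set.mem_uIcc_of_le hdm.1 hdm.2]
  obtain ⟨t₀, ht₀, hv0⟩ := exists_zero_of_integral_zero hc h0
  intro x hx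
  set z := if t₀ ≤ x then x else x + 1 with hz_def
  have hz1 : v z = v x := by
    rw [hz_def]
    split_ifs with hcase
    · rfl
    · exact hper x
  have htz : t₀ ≤ z ∧ z ≤ t₀ + 1 := by
    rw [hz_def]
    split_ifs with hcase
    · exact ⟨hcase, hx.2.trans (by linarith [ht₀.1])⟩
    · push_neg at hcase
      exact ⟨by linarith [ht₀.2, hx.1], by linarith [hcase]⟩
  have hzm : z ∈ Icc (0:ℝ) 2 := ⟨le_trans ht₀.1 htz.1, htz.2.trans (by linarith [ht₀.2])⟩
  have ht₀m : t₀ ∈ Icc (0:ℝ) 2 := ⟨ht₀.1, ht₀.2.trans one_le_two⟩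
  have ht₁m : t₀ + 1 ∈ Icc (0:ℝ) 2 := ⟨by linarith [ht₀.1], by linarith [ht₀.2]⟩
  have hftc : ∫ t in t₀..z, v' t = v z - v t₀ :=
    intervalIntegral.integral_eq_sub_of_hasDerivAt (fun t _ => hd t) (hii _ _ ht₀m hzm)
  have habs : |v x| = |∫ t in t₀..z, v' t| := by rw [hftc, hv0, sub_zero, hz1]
  rw [habs]
  calc |∫ t in t₀..z, v' t| ≤ ∫ t in t₀..z, |v' t| :=
        intervalIntegral.abs_integral_le_integral_abs htz.1
    _ ≤ ∫ t in t₀..t₀+1, |v' t| := by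
        rw [← intervalIntegral.integral_add_adjacent_intervals
          ((hii _ _ ht₀m hzm).abs) ((hii _ _ hzm ht₁m).abs)]
        have : 0 ≤ ∫ t in z..t₀+1, |v' t| :=
          intervalIntegral.integral_nonneg htz.2 fun t _ => abs_nonneg _
        linarith
    _ = ∫ t in (0:ℝ)..1, |v' t| := by
        have habs_per : Function.Periodic (fun t => |v' t|) 1 := fun t => by
          simp [hv'per t]
        have := habs_per.intervalIntegral_add_eq t₀ 0
        simpa using this

lemma aemeas_lint_right {α β : Type*} [MeasurableSpace α] [MeasurableSpace β]
    {μ : Measure α} {ν : Measure β} [SFinite ν] {f : α × β → ℝ≥0∞}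
    (hf : AEMeasurable f (μ.prod ν)) :
    AEMeasurable (fun x => ∫⁻ y, f (x, y) ∂ν) μ :=
  ⟨fun x => ∫⁻ y, hf.mk f (x, y) ∂ν, hf.measurable_mk.lintegral_prod_right', by
    filter_upwards [Measure.ae_ae_of_ae_prod hf.ae_eq_mk] with x hx using lintegral_congr_ae hx⟩

lemma aemeas_lint_left {α β : Type*} [MeasurableSpace α] [MeasurableSpace β]
    {μ : Measure α} {ν : Measure β} [SFinite μ] [SFinite ν] {f : α × β → ℝ≥0∞}
    (hf : AEMeasurable f (μ.prod ν)) :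
    AEMeasurable (fun y => ∫⁻ x, f (x, y) ∂μ) ν :=
  aemeas_lint_right hf.prod_swap

/-- Anisotropic triple product bound combined with the Poincaré inequality:
|∫ f̃ g h| ≤ C ‖∂₁f̃‖ ‖g‖^{1/2} ‖∂₂g‖^{1/2} ‖h‖. -/
theorem triple_product_osc_poincare :
    ∃ C : ℝ, 0 < C ∧ ∀ (f g h f1 g2 : ℝ × ℝ → ℝ),
      (∀ x : ℝ × ℝ, f (x.1 + 1, x.2) = f x) →
      (∀ x : ℝ × ℝ, g (x.1 + 1, x.2) = g x) →
      (∀ x : ℝ × ℝ, h (x.1 + 1, x.2) = h x) →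
      (∀ y : ℝ, IntegrableOn (fun t => f (t, y)) (Ioc (0:ℝ) 1)) →
      (∀ x : ℝ × ℝ, HasDerivAt (fun t => osc f (t, x.2)) (f1 x) x.1) →
      (∀ x : ℝ × ℝ, HasDerivAt (fun s => g (x.1, s)) (g2 x) x.2) →
      MemLp (osc f) 2 μΩ → MemLp g 2 μΩ → MemLp h 2 μΩ →
      MemLp f1 2 μΩ → MemLp g2 2 μΩ →
      |∫ x, osc f x * g x * h x ∂μΩ| ≤
        C * (eLpNorm f1 2 μΩ).toReal *
          Real.sqrt ((eLpNorm g 2 μΩ).toReal) * Real.sqrt ((eLpNorm g2 2 μΩ).toReal) *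
          (eLpNorm h 2 μΩ).toReal := by
  refine ⟨2, two_pos, ?_⟩
  intro f g h f1 g2 hfper hgper hhper hfint hf1d hg2d hfm hgm hhm hf1m hg2m
  set μ1 : Measure ℝ := volume.restrict (Ioc (0:ℝ) 1) with hμ1
  have hμΩ : μΩ = μ1.prod volume := rfl
  haveI hμ1fin : IsFiniteMeasure μ1 := by
    constructor
    rw [hμ1, Measure.restrict_apply MeasurableSet.univ, univ_inter, Real.volume_Ioc]
    norm_num
  have hμ1univ : μ1 Set.univ = 1 := by
    rw [hμ1, Measure.restrict_apply MeasurableSet.univ, univ_inter, Real.volume_Ioc]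
    norm_num
  -- ENNReal-valued norm quantities
  have hmf : AEMeasurable (fun x : ℝ×ℝ => (‖osc f x‖₊ : ℝ≥0∞)) (μ1.prod volume) := by
    rw [← hμΩ]; exact hfm.1.enorm
  have hmg : AEMeasurable (fun x : ℝ×ℝ => (‖g x‖₊ : ℝ≥0∞)) (μ1.prod volume) := by
    rw [← hμΩ]; exact hgm.1.enorm
  have hmh : AEMeasurable (fun x : ℝ×ℝ => (‖h x‖₊ : ℝ≥0∞)) (μ1.prod volume) := by
    rw [← hμΩ]; exact hhm.1.enorm
  have hmf1 : AEMeasurable (fun x : ℝ×ℝ => (‖f1 x‖₊ : ℝ≥0∞)) (μ1.prod volume) := by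
    rw [← hμΩ]; exact hf1m.1.enorm
  have hmg2 : AEMeasurable (fun x : ℝ×ℝ => (‖g2 x‖₊ : ℝ≥0∞)) (μ1.prod volume) := by
    rw [← hμΩ]; exact hg2m.1.enorm
  set F : ℝ → ℝ≥0∞ := fun y => (∫⁻ t, (‖f1 (t, y)‖₊ : ℝ≥0∞) ^ (2:ℝ) ∂μ1) ^ (1/2:ℝ) with hF
  set P : ℝ → ℝ≥0∞ := fun t => (∫⁻ y, (‖g (t, y)‖₊ : ℝ≥0∞) ^ (2:ℝ)) ^ (1/2:ℝ) with hP
  set Q : ℝ → ℝ≥0∞ := fun t => (∫⁻ y, (‖g2 (t, y)‖₊ : ℝ≥0∞) ^ (2:ℝ)) ^ (1/2:ℝ) with hQ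
  set Hh : ℝ → ℝ≥0∞ := fun t => (∫⁻ y, (‖h (t, y)‖₊ : ℝ≥0∞) ^ (2:ℝ)) ^ (1/2:ℝ) with hHh
  set G : ℝ → ℝ≥0∞ := fun t => (2 * P t * Q t) ^ (1/2:ℝ) with hG
  have hFmeas : AEMeasurable F volume := (aemeas_lint_left (hmf1.pow_const (2:ℝ))).pow_const _
  have hPmeas : AEMeasurable P μ1 := (aemeas_lint_right (hmg.pow_const (2:ℝ))).pow_const _
  have hQmeas : AEMeasurable Q μ1 := (aemeas_lint_right (hmg2.pow_const (2:ℝ))).pow_const _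
  have hHmeas : AEMeasurable Hh μ1 := (aemeas_lint_right (hmh.pow_const (2:ℝ))).pow_const _
  have hGmeas : AEMeasurable G μ1 := ((hPmeas.const_mul 2).mul hQmeas).pow_const _
  -- square identities
  have hF2 : ∫⁻ y, F y ^ (2:ℝ) = ∫⁻ x, (‖f1 x‖₊ : ℝ≥0∞) ^ (2:ℝ) ∂(μ1.prod volume) := by
    rw [lintegral_prod_symm _ (hmf1.pow_const (2:ℝ))]
    exact lintegral_congr fun y => sq_sqrt' _
  have hP2 : ∫⁻ t, P t ^ (2:ℝ) ∂μ1 = ∫⁻ x, (‖g x‖₊ : ℝ≥0∞) ^ (2:ℝ) ∂(μ1.prod volume) := by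
    rw [lintegral_prod _ (hmg.pow_const (2:ℝ))]
    exact lintegral_congr fun t => sq_sqrt' _
  have hQ2 : ∫⁻ t, Q t ^ (2:ℝ) ∂μ1 = ∫⁻ x, (‖g2 x‖₊ : ℝ≥0∞) ^ (2:ℝ) ∂(μ1.prod volume) := by
    rw [lintegral_prod _ (hmg2.pow_const (2:ℝ))]
    exact lintegral_congr fun t => sq_sqrt' _
  have hH2 : ∫⁻ t, Hh t ^ (2:ℝ) ∂μ1 = ∫⁻ x, (‖h x‖₊ : ℝ≥0∞) ^ (2:ℝ) ∂(μ1.prod volume) := by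
    rw [lintegral_prod _ (hmh.pow_const (2:ℝ))]
    exact lintegral_congr fun t => sq_sqrt' _
  -- eLpNorm identities
  have heF1 : eLpNorm f1 2 μΩ = (∫⁻ x, (‖f1 x‖₊ : ℝ≥0∞) ^ (2:ℝ) ∂(μ1.prod volume)) ^ (1/2:ℝ) :=
    eLp2 _ _
  have heG : eLpNorm g 2 μΩ = (∫⁻ x, (‖g x‖₊ : ℝ≥0∞) ^ (2:ℝ) ∂(μ1.prod volume)) ^ (1/2:ℝ) :=
    eLp2 _ _
  have heG2 : eLpNorm g2 2 μΩ = (∫⁻ x, (‖g2 x‖₊ : ℝ≥0∞) ^ (2:ℝ) ∂(μ1.prod volume)) ^ (1/2:ℝ) :=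
    eLp2 _ _
  have heH : eLpNorm h 2 μΩ = (∫⁻ x, (‖h x‖₊ : ℝ≥0∞) ^ (2:ℝ) ∂(μ1.prod volume)) ^ (1/2:ℝ) :=
    eLp2 _ _
  -- good lines
  have hGfin : ∫⁻ x, (‖g x‖₊ : ℝ≥0∞) ^ (2:ℝ) ∂(μ1.prod volume) ≠ ⊤ := by
    intro htop
    have h2 := hgm.2
    rw [heG, htop, ENNReal.top_rpow_of_pos (by norm_num)] at h2
    exact (lt_irrefl _ h2).elim
  have hgood1 : ∀ᵐ t ∂μ1, (∫⁻ y, (‖g (t, y)‖₊ : ℝ≥0∞) ^ (2:ℝ)) ≠ ⊤ := by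
    rw [lintegral_prod _ (hmg.pow_const (2:ℝ))] at hGfin
    filter_upwards [ae_lt_top' (aemeas_lint_right (hmg.pow_const (2:ℝ))) hGfin] with t ht
    exact ht.ne
  have hgood2 : ∀ᵐ t ∂μ1, AEMeasurable (fun y => (‖h (t, y)‖₊ : ℝ≥0∞)) volume := by
    have := hhm.1
    rw [hμΩ] at this
    filter_upwards [this.prodMk_left] with t ht using ht.enorm
  have hgood0 : ∀ᵐ t ∂μ1, t ∈ Ioc (0:ℝ) 1 := ae_restrict_mem measurableSet_Ioc
  -- a.e. pointwise-line estimate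
  have hstep1 : ∀ᵐ t ∂μ1,
      (∫⁻ y, (‖osc f (t, y)‖₊ : ℝ≥0∞) * (‖g (t, y)‖₊ : ℝ≥0∞) * (‖h (t, y)‖₊ : ℝ≥0∞))
        ≤ G t * ((∫⁻ y, F y ^ (2:ℝ)) ^ (1/2:ℝ) * Hh t) := by
    filter_upwards [hgood0, hgood1, hgood2] with t htm hfin hhline
    -- Agmon bound for g on the vertical line
    have hgac : ∀ y, (‖g (t, y)‖₊ : ℝ≥0∞) ≤ G t := by
      intro y
      have hlb := line_bound_sq (u := fun s => g (t, s)) (u' := fun s => g2 (t, s))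
        (fun s => hg2d (t, s)) hfin y
      have h2 := ENNReal.rpow_le_rpow hlb (by norm_num : (0:ℝ) ≤ 1/2)
      rwa [sqrt_sq'] at h2
    have hpt : ∀ y, (‖osc f (t, y)‖₊ : ℝ≥0∞) * (‖g (t, y)‖₊ : ℝ≥0∞) * (‖h (t, y)‖₊ : ℝ≥0∞)
        ≤ G t * (F y * (‖h (t, y)‖₊ : ℝ≥0∞)) := by
      intro y
      by_cases hgy : (‖g (t, y)‖₊ : ℝ≥0∞) = 0
      · rw [hgy, mul_zero, zero_mul]; exact zero_le
      by_cases hhy : (‖h (t, y)‖₊ : ℝ≥0∞) = 0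
      · rw [hhy, mul_zero]; exact zero_le
      by_cases hFy : F y = ⊤
      · have hGt : G t ≠ 0 := fun h0 => hgy (le_antisymm (h0 ▸ hgac y) (zero_le))
        rw [hFy, ENNReal.top_mul hhy, ENNReal.mul_top hGt]
        exact le_top
      · -- the oscillation bound
        have hSfin : ∫⁻ s, (‖f1 (s, y)‖₊ : ℝ≥0∞) ^ (2:ℝ) ∂μ1 ≠ ⊤ := by
          intro htop
          rw [hF] at hFy
          simp only [htop, ENNReal.top_rpow_of_pos (by norm_num : (0:ℝ) < 1/2)] at hFy
          exact hFy trivial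
        have hvd : ∀ s : ℝ, HasDerivAt (fun r => osc f (r, y)) (f1 (s, y)) s :=
          fun s => hf1d (s, y)
        have hv'meas : Measurable (fun s => f1 (s, y)) := by
          have heq : (fun s => f1 (s, y)) = deriv (fun r => osc f (r, y)) :=
            funext fun s => ((hvd s).deriv).symm
          rw [heq]; exact measurable_deriv _
        have hmem : MemLp (fun s => f1 (s, y)) 2 μ1 := ⟨hv'meas.aestronglyMeasurable, by
          rw [eLp2]; exact ENNReal.rpow_lt_top_of_nonneg (by norm_num) hSfin⟩
        have hIok : Integrable (fun s => f1 (s, y)) μ1 := hmem.integrable one_le_two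
        have hint : IntervalIntegrable (fun s => f1 (s, y)) volume 0 1 := by
          rw [intervalIntegrable_iff_integrableOn_Ioc_of_le zero_le_one]
          exact hIok
        have hperv : ∀ s : ℝ, osc f (s + 1, y) = osc f (s, y) := by
          intro s
          have hp : f (s + 1, y) = f (s, y) := hfper (s, y)
          show f (s + 1, y) - havg f y = f (s, y) - havg f y
          rw [hp]
        have h0 : ∫ r in (0:ℝ)..1, osc f (r, y) = 0 := by
          have hfi : IntervalIntegrable (fun r => f (r, y)) volume 0 1 := by
            rw [intervalIntegrable_iff_integrableOn_Ioc_of_le zero_le_one]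
            exact hfint y
          simp only [osc]
          rw [intervalIntegral.integral_sub hfi intervalIntegrable_const]
          simp [havg]
        have hbd := periodic_line_bound hperv hvd h0 hint t htm
        have hosc : (‖osc f (t, y)‖₊ : ℝ≥0∞) ≤ F y := by
          calc (‖osc f (t, y)‖₊ : ℝ≥0∞) = ENNReal.ofReal |osc f (t, y)| := by
                rw [← ofReal_norm_eq_coe_nnnorm, Real.norm_eq_abs]
            _ ≤ ENNReal.ofReal (∫ s in (0:ℝ)..1, |f1 (s, y)|) := ENNReal.ofReal_le_ofReal hbd
            _ = ∫⁻ s, (‖f1 (s, y)‖₊ : ℝ≥0∞) ∂μ1 := by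
                rw [intervalIntegral.integral_of_le zero_le_one]
                rw [MeasureTheory.ofReal_integral_eq_lintegral_ofReal hIok.abs
                  (Filter.Eventually.of_forall fun s => abs_nonneg _)]
                refine lintegral_congr fun s => ?_
                rw [← ofReal_norm_eq_coe_nnnorm, Real.norm_eq_abs]
            _ ≤ (∫⁻ s, (‖f1 (s, y)‖₊ : ℝ≥0∞) ^ (2:ℝ) ∂μ1) ^ (1/2:ℝ)
                  * (∫⁻ s, (1:ℝ≥0∞) ^ (2:ℝ) ∂μ1) ^ (1/2:ℝ) := by
                have hcs := ENNReal.lintegral_mul_le_Lp_mul_Lq (g := fun _ => (1:ℝ≥0∞)) μ1 conj22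
                  (hv'meas.nnnorm.coe_nnreal_ennreal.aemeasurable) aemeasurable_const
                simp only [Pi.mul_apply, mul_one] at hcs
                exact hcs
            _ = F y := by
                simp only [ENNReal.one_rpow]
                rw [lintegral_one, hμ1univ, ENNReal.one_rpow, mul_one, hF]
        calc (‖osc f (t, y)‖₊ : ℝ≥0∞) * (‖g (t, y)‖₊ : ℝ≥0∞) * (‖h (t, y)‖₊ : ℝ≥0∞)
            ≤ F y * G t * (‖h (t, y)‖₊ : ℝ≥0∞) :=
              mul_le_mul' (mul_le_mul' hosc (hgac y)) le_rfl
          _ = G t * (F y * (‖h (t, y)‖₊ : ℝ≥0∞)) := by ring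
    calc (∫⁻ y, (‖osc f (t, y)‖₊ : ℝ≥0∞) * (‖g (t, y)‖₊ : ℝ≥0∞) * (‖h (t, y)‖₊ : ℝ≥0∞))
        ≤ ∫⁻ y, G t * (F y * (‖h (t, y)‖₊ : ℝ≥0∞)) := lintegral_mono hpt
      _ = G t * ∫⁻ y, F y * (‖h (t, y)‖₊ : ℝ≥0∞) :=
          lintegral_const_mul'' _ (hFmeas.mul hhline)
      _ ≤ G t * ((∫⁻ y, F y ^ (2:ℝ)) ^ (1/2:ℝ) * Hh t) := by
          refine mul_le_mul_right ?_ _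
          have hcs := ENNReal.lintegral_mul_le_Lp_mul_Lq volume conj22 hFmeas hhline
          simp only [Pi.mul_apply] at hcs
          exact hcs
  -- main ENNReal estimate
  have hmain : ∫⁻ x, (‖osc f x‖₊ : ℝ≥0∞) * (‖g x‖₊ : ℝ≥0∞) * (‖h x‖₊ : ℝ≥0∞) ∂(μ1.prod volume)
      ≤ eLpNorm f1 2 μΩ *
        ((2 * eLpNorm g 2 μΩ * eLpNorm g2 2 μΩ) ^ (1/2:ℝ) * eLpNorm h 2 μΩ) := by
    have hmeas3 : AEMeasurable
        (fun x : ℝ×ℝ => (‖osc f x‖₊ : ℝ≥0∞) * (‖g x‖₊ : ℝ≥0∞) * (‖h x‖₊ : ℝ≥0∞))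
        (μ1.prod volume) := (hmf.mul hmg).mul hmh
    rw [lintegral_prod _ hmeas3]
    calc ∫⁻ t, ∫⁻ y, ((‖osc f (t,y)‖₊:ℝ≥0∞) * (‖g (t,y)‖₊:ℝ≥0∞) * (‖h (t,y)‖₊:ℝ≥0∞)) ∂volume ∂μ1
        ≤ ∫⁻ t, G t * ((∫⁻ y, F y ^ (2:ℝ)) ^ (1/2:ℝ) * Hh t) ∂μ1 := lintegral_mono_ae hstep1
      _ = ∫⁻ t, (∫⁻ y, F y ^ (2:ℝ)) ^ (1/2:ℝ) * (G t * Hh t) ∂μ1 :=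
          lintegral_congr fun t => by ring
      _ = (∫⁻ y, F y ^ (2:ℝ)) ^ (1/2:ℝ) * ∫⁻ t, G t * Hh t ∂μ1 :=
          lintegral_const_mul'' _ (hGmeas.mul hHmeas)
      _ ≤ (∫⁻ y, F y ^ (2:ℝ)) ^ (1/2:ℝ) *
            ((∫⁻ t, G t ^ (2:ℝ) ∂μ1) ^ (1/2:ℝ) * (∫⁻ t, Hh t ^ (2:ℝ) ∂μ1) ^ (1/2:ℝ)) := by
          refine mul_le_mul_right ?_ _
          have hcs := ENNReal.lintegral_mul_le_Lp_mul_Lq μ1 conj22 hGmeas hHmeas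
          simp only [Pi.mul_apply] at hcs
          exact hcs
      _ ≤ eLpNorm f1 2 μΩ *
            ((2 * eLpNorm g 2 μΩ * eLpNorm g2 2 μΩ) ^ (1/2:ℝ) * eLpNorm h 2 μΩ) := by
          have e1 : (∫⁻ y, F y ^ (2:ℝ)) ^ (1/2:ℝ) = eLpNorm f1 2 μΩ := by rw [hF2, heF1]
          have e3 : (∫⁻ t, Hh t ^ (2:ℝ) ∂μ1) ^ (1/2:ℝ) = eLpNorm h 2 μΩ := by rw [hH2, heH]
          have e2 : (∫⁻ t, G t ^ (2:ℝ) ∂μ1) ^ (1/2:ℝ)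
              ≤ (2 * eLpNorm g 2 μΩ * eLpNorm g2 2 μΩ) ^ (1/2:ℝ) := by
            refine ENNReal.rpow_le_rpow ?_ (by norm_num)
            calc ∫⁻ t, G t ^ (2:ℝ) ∂μ1 = ∫⁻ t, 2 * (P t * Q t) ∂μ1 := by
                  refine lintegral_congr fun t => ?_
                  rw [hG]
                  rw [sq_sqrt', mul_assoc]
              _ = 2 * ∫⁻ t, P t * Q t ∂μ1 := lintegral_const_mul'' _ (hPmeas.mul hQmeas)
              _ ≤ 2 * ((∫⁻ t, P t ^ (2:ℝ) ∂μ1) ^ (1/2:ℝ) * (∫⁻ t, Q t ^ (2:ℝ) ∂μ1) ^ (1/2:ℝ)) := by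
                  refine mul_le_mul_right ?_ _
                  have hcs := ENNReal.lintegral_mul_le_Lp_mul_Lq μ1 conj22 hPmeas hQmeas
                  simp only [Pi.mul_apply] at hcs
                  exact hcs
              _ = 2 * eLpNorm g 2 μΩ * eLpNorm g2 2 μΩ := by
                  rw [hP2, hQ2, ← heG, ← heG2, mul_assoc]
          rw [e1, e3]
          exact mul_le_mul_right (mul_le_mul_left e2 _) _
  -- finiteness
  have hf1fin : eLpNorm f1 2 μΩ ≠ ⊤ := hf1m.2.ne
  have hgfin' : eLpNorm g 2 μΩ ≠ ⊤ := hgm.2.ne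
  have hg2fin : eLpNorm g2 2 μΩ ≠ ⊤ := hg2m.2.ne
  have hhfin : eLpNorm h 2 μΩ ≠ ⊤ := hhm.2.ne
  have hXfin : (2 * eLpNorm g 2 μΩ * eLpNorm g2 2 μΩ) ^ (1/2:ℝ) ≠ ⊤ := by
    refine ENNReal.rpow_ne_top_of_nonneg (by norm_num) ?_
    exact ENNReal.mul_ne_top (ENNReal.mul_ne_top (by norm_num) hgfin') hg2fin
  have hne : eLpNorm f1 2 μΩ *
      ((2 * eLpNorm g 2 μΩ * eLpNorm g2 2 μΩ) ^ (1/2:ℝ) * eLpNorm h 2 μΩ) ≠ ⊤ :=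
    ENNReal.mul_ne_top hf1fin (ENNReal.mul_ne_top hXfin hhfin)
  -- conversion to reals
  have hfinal : |∫ x, osc f x * g x * h x ∂μΩ| ≤
      (eLpNorm f1 2 μΩ *
        ((2 * eLpNorm g 2 μΩ * eLpNorm g2 2 μΩ) ^ (1/2:ℝ) * eLpNorm h 2 μΩ)).toReal := by
    have h1 : |∫ x, osc f x * g x * h x ∂μΩ|
        ≤ (∫⁻ x, ENNReal.ofReal ‖osc f x * g x * h x‖ ∂μΩ).toReal := by
      rw [← Real.norm_eq_abs]
      exact norm_integral_le_lintegral_norm _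
    refine h1.trans ?_
    have h2 : ∫⁻ x, ENNReal.ofReal ‖osc f x * g x * h x‖ ∂μΩ
        = ∫⁻ x, (‖osc f x‖₊ : ℝ≥0∞) * (‖g x‖₊ : ℝ≥0∞) * (‖h x‖₊ : ℝ≥0∞) ∂(μ1.prod volume) := by
      rw [← hμΩ]
      refine lintegral_congr fun x => ?_
      rw [ofReal_norm_eq_coe_nnnorm, nnnorm_mul, nnnorm_mul, ENNReal.coe_mul, ENNReal.coe_mul]
    rw [h2]
    exact ENNReal.toReal_mono hne hmain
  refine hfinal.trans ?_
  rw [ENNReal.toReal_mul, ENNReal.toReal_mul]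
  set a := (eLpNorm g 2 μΩ).toReal with ha_def
  set b := (eLpNorm g2 2 μΩ).toReal with hb_def
  have ha : 0 ≤ a := ENNReal.toReal_nonneg
  have hb : 0 ≤ b := ENNReal.toReal_nonneg
  have hX : ((2 * eLpNorm g 2 μΩ * eLpNorm g2 2 μΩ) ^ (1/2:ℝ)).toReal
      ≤ 2 * (Real.sqrt a * Real.sqrt b) := by
    rw [← ENNReal.toReal_rpow, ENNReal.toReal_mul, ENNReal.toReal_mul, ← ha_def, ← hb_def]
    rw [show ((2:ℝ≥0∞).toReal) = (2:ℝ) by simp]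
    rw [← Real.sqrt_eq_rpow]
    rw [Real.sqrt_mul (by positivity : (0:ℝ) ≤ 2*a) b,
        Real.sqrt_mul (by norm_num : (0:ℝ) ≤ 2) a]
    have h2' : Real.sqrt 2 ≤ 2 := by
      nlinarith [Real.sq_sqrt (by norm_num : (0:ℝ) ≤ 2), Real.sqrt_nonneg 2]
    have := mul_le_mul_of_nonneg_right (mul_le_mul_of_nonneg_right h2' (Real.sqrt_nonneg a))
      (Real.sqrt_nonneg b)
    calc Real.sqrt 2 * Real.sqrt a * Real.sqrt b ≤ 2 * Real.sqrt a * Real.sqrt b := this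
      _ = 2 * (Real.sqrt a * Real.sqrt b) := by ring
  calc (eLpNorm f1 2 μΩ).toReal *
        (((2 * eLpNorm g 2 μΩ * eLpNorm g2 2 μΩ) ^ (1/2:ℝ)).toReal * (eLpNorm h 2 μΩ).toReal)
      ≤ (eLpNorm f1 2 μΩ).toReal *
        ((2 * (Real.sqrt a * Real.sqrt b)) * (eLpNorm h 2 μΩ).toReal) := by
        refine mul_le_mul_of_nonneg_left ?_ ENNReal.toReal_nonneg
        exact mul_le_mul_of_nonneg_right hX ENNReal.toReal_nonneg
    _ = 2 * (eLpNorm f1 2 μΩ).toReal * Real.sqrt a * Real.sqrt b * (eLpNorm h 2 μΩ).toReal := by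
        ring
end
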